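/- arXiv:1110.6426 — 6 statements merged into one kernel-verified Lean document; each statement's English description precedes it below -/
import Mathlib

section
/- Let C be an n×n real matrix with nonnegative entries. If there exist vectors p ≥ 0 (componentwise) and η with strictly positive components such that (I − C) p ≥ η componentwise, then the spectral radius of C is strictly less than 1 (and moreover p has strictly positive components). -/
open Matrix

/-- The spectral radius of a real square matrix: the maximum of the absolute values of
its complex eigenvalues (elements of the spectrum of the matrix over `ℂ`). -/
noncomputable def specRad {n : ℕ} (C : Matrix (Fin n) (Fin n) ℝ) : ℝ :=
  sSup ((fun z : ℂ => ‖z‖) '' spectrum ℂ (C.map (algebraMap ℝ ℂ)))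

theorem specRad_lt_one_aux
    (n : ℕ) (C : Matrix (Fin n) (Fin n) ℝ) (hC : ∀ i j, 0 ≤ C i j)
    (p η : Fin n → ℝ) (hp : ∀ i, 0 ≤ p i) (hη : ∀ i, 0 < η i)
    (h : ∀ i, η i ≤ ((1 - C) *ᵥ p) i) :
    sSup ((fun z : ℂ => ‖z‖) '' spectrum ℂ (C.map (algebraMap ℝ ℂ))) < 1 ∧ ∀ i, 0 < p i := by
  have hCp0 : ∀ i, 0 ≤ (C *ᵥ p) i := by
    intro i
    rw [Matrix.mulVec, dotProduct]
    exact Finset.sum_nonneg fun j _ => mul_nonneg (hC i j) (hp j)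
  have hCp : ∀ i, (C *ᵥ p) i ≤ p i - η i := by
    intro i
    have := h i
    rw [sub_mulVec, one_mulVec] at this
    simp only [Pi.sub_apply] at this
    linarith
  have hppos : ∀ i, 0 < p i := fun i => lt_of_lt_of_le (hη i) (by linarith [hCp i, hCp0 i])
  refine ⟨?_, hppos⟩
  rcases Nat.eq_zero_or_pos n with hn | hn
  · subst hn
    have : spectrum ℂ (C.map (algebraMap ℝ ℂ)) = ∅ := by
      ext μ
      simp [spectrum.mem_iff, isUnit_of_subsingleton]
    rw [this]
    simp [Real.sSup_empty]
  · haveI : Nonempty (Fin n) := ⟨⟨0, hn⟩⟩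
    set c : ℝ := Finset.univ.sup' Finset.univ_nonempty (fun i => (p i - η i) / p i) with hc
    have hcmem : ∀ i, (p i - η i) / p i ≤ c := fun i =>
      Finset.le_sup' (fun i => (p i - η i) / p i) (Finset.mem_univ i)
    obtain ⟨ic, -, hic⟩ := Finset.exists_mem_eq_sup' Finset.univ_nonempty
      (fun i => (p i - η i) / p i)
    have hc1 : c < 1 := by
      rw [hc, hic]
      rw [div_lt_one (hppos ic)]
      linarith [hη ic]
    have hc0 : 0 ≤ c := by
      refine le_trans ?_ (hcmem ⟨0, hn⟩)
      exact div_nonneg (by linarith [hCp ⟨0, hn⟩, hCp0 ⟨0, hn⟩]) (hppos _).le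
    refine lt_of_le_of_lt (Real.sSup_le ?_ hc0) hc1
    rintro x ⟨μ, hμ, rfl⟩
    -- get eigenvector
    rw [← AlgEquiv.spectrum_eq (Matrix.toLinAlgEquiv' : Matrix (Fin n) (Fin n) ℂ ≃ₐ[ℂ] _),
      ← Module.End.hasEigenvalue_iff_mem_spectrum] at hμ
    obtain ⟨v, hv⟩ := hμ.exists_hasEigenvector
    have hv0 : v ≠ 0 := hv.2
    have hAv : (C.map (algebraMap ℝ ℂ)) *ᵥ v = μ • v := by
      simpa [Matrix.toLinAlgEquiv'_apply] using hv.apply_eq_smul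
    set w : Fin n → ℝ := fun i => ‖v i‖ with hw
    have hw0 : ∀ i, 0 ≤ w i := fun i => norm_nonneg _
    set θ : ℝ := Finset.univ.sup' Finset.univ_nonempty (fun i => w i / p i) with hθ
    have hwle : ∀ i, w i ≤ θ * p i := by
      intro i
      have := Finset.le_sup' (f := fun i => w i / p i) (Finset.mem_univ i)
      rw [div_le_iff₀ (hppos i)] at this
      linarith
    obtain ⟨i0, -, hi0⟩ := Finset.exists_mem_eq_sup' Finset.univ_nonempty
      (fun i => w i / p i)
    have hwi0 : w i0 = θ * p i0 := by
      have : θ = w i0 / p i0 := by rw [hθ, hi0]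
      rw [this, div_mul_cancel₀ _ (hppos i0).ne']
    have hθpos : 0 < θ := by
      obtain ⟨j, hj⟩ := Function.ne_iff.mp hv0
      have hwj : 0 < w j := by
        simp only [hw]
        exact norm_pos_iff.mpr hj
      have : w j / p j ≤ θ := Finset.le_sup' (fun i => w i / p i) (Finset.mem_univ j)
      exact lt_of_lt_of_le (div_pos hwj (hppos j)) this
    -- key inequality
    have key : ‖μ‖ * w i0 ≤ θ * (C *ᵥ p) i0 := by
      have h1 : ‖μ‖ * w i0 = ‖(C.map (algebraMap ℝ ℂ) *ᵥ v) i0‖ := by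
        rw [hAv]
        simp [hw, _root_.map_mul]
      rw [h1]
      calc ‖(C.map (algebraMap ℝ ℂ) *ᵥ v) i0‖
          ≤ ∑ j, C i0 j * w j := by
            rw [Matrix.mulVec, dotProduct]
            refine le_trans (norm_sum_le _ _) (Finset.sum_le_sum fun j _ => ?_)
            simp only [Matrix.map_apply, norm_mul, hw]
            rw [show (algebraMap ℝ ℂ) (C i0 j) = ((C i0 j : ℝ) : ℂ) from rfl,
              Complex.norm_real, Real.norm_of_nonneg (hC i0 j)]
        _ ≤ ∑ j, C i0 j * (θ * p j) :=
            Finset.sum_le_sum fun j _ => mul_le_mul_of_nonneg_left (hwle j) (hC i0 j)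
        _ = θ * (C *ᵥ p) i0 := by
            rw [Matrix.mulVec, dotProduct, Finset.mul_sum]
            exact Finset.sum_congr rfl fun j _ => by ring
    have h2 : θ * (C *ᵥ p) i0 ≤ θ * (p i0 - η i0) :=
      mul_le_mul_of_nonneg_left (hCp i0) hθpos.le
    have h3 : ‖μ‖ * (θ * p i0) ≤ θ * (p i0 - η i0) := by
      rw [← hwi0]; exact key.trans h2
    have h4 : ‖μ‖ ≤ (p i0 - η i0) / p i0 := by
      rw [le_div_iff₀ (hppos i0)]
      have hθp : 0 < θ * p i0 := mul_pos hθpos (hppos i0)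
      nlinarith
    exact h4.trans (hcmem i0)

/-- If `C` is a nonnegative matrix and there exist `p ≥ 0` and a strictly
positive vector `η` with `(I - C) p ≥ η` componentwise, then the spectral radius of `C`
is strictly less than `1`, and moreover `p` is strictly positive componentwise. -/
theorem specRad_lt_one_of_subinvariant
    (n : ℕ) (C : Matrix (Fin n) (Fin n) ℝ) (hC : ∀ i j, 0 ≤ C i j)
    (p η : Fin n → ℝ) (hp : ∀ i, 0 ≤ p i) (hη : ∀ i, 0 < η i)
    (h : ∀ i, η i ≤ ((1 - C) *ᵥ p) i) :
    specRad C < 1 ∧ ∀ i, 0 < p i := by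
  have := specRad_lt_one_aux n C hC p η hp hη h
  rw [specRad]
  exact this
end

section
/- Let C be an n×n real matrix with nonnegative entries. Then I − C is invertible with (I − C)^{-1} having all entries nonnegative if and only if the spectral radius of C is strictly less than 1. -/
open Matrix

section AuxSpecRad
open Filter
open scoped ENNReal NNReal

variable {n : ℕ}

attribute [local instance] Matrix.linftyOpNormedRing Matrix.linftyOpNormedAlgebra

private noncomputable local instance : CompleteSpace (Matrix (Fin n) (Fin n) ℂ) :=
  FiniteDimensional.complete ℂ _

private lemma specRad_entry_norm_le (A : Matrix (Fin n) (Fin n) ℂ) (i j : Fin n) :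
    ‖A i j‖ ≤ ‖A‖ := by
  rw [Matrix.linfty_opNorm_def]
  calc ‖A i j‖ ≤ ((∑ j', ‖A i j'‖₊ : NNReal) : ℝ) := by
        push_cast
        exact Finset.single_le_sum (f := fun j' => ‖A i j'‖) (fun _ _ => norm_nonneg _)
          (Finset.mem_univ j)
    _ ≤ _ := by
        exact_mod_cast Finset.le_sup (f := fun i : Fin n => ∑ j' , ‖A i j'‖₊) (Finset.mem_univ i)

/-- If the (real) spectral radius is `< 1`, entries of powers tend to zero. -/
private lemma specRad_tendsto_entry_pow (C : Matrix (Fin n) (Fin n) ℝ)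
    (h : sSup ((fun z : ℂ => ‖z‖) '' spectrum ℂ (C.map (algebraMap ℝ ℂ))) < 1) (i j : Fin n) :
    Tendsto (fun k => (C ^ k) i j) atTop (nhds 0) := by
  set Cc := C.map (algebraMap ℝ ℂ) with hCc
  have hfin : ((fun z : ℂ => ‖z‖) '' spectrum ℂ Cc).Finite := (Matrix.finite_spectrum Cc).image _
  have hbdd : BddAbove ((fun z : ℂ => ‖z‖) '' spectrum ℂ Cc) := hfin.bddAbove
  have hρ : spectralRadius ℂ Cc < 1 := by
    rw [spectralRadius]
    refine lt_of_le_of_lt (iSup₂_le fun lam hlam => ?_)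
      (show ENNReal.ofReal (sSup ((fun z : ℂ => ‖z‖) '' spectrum ℂ Cc)) < 1 by
        rw [ENNReal.ofReal_lt_one]; exact h)
    have : ‖lam‖ ≤ sSup ((fun z : ℂ => ‖z‖) '' spectrum ℂ Cc) :=
      le_csSup hbdd ⟨lam, hlam, rfl⟩
    rw [← ENNReal.ofReal_coe_nnreal, coe_nnnorm]
    exact ENNReal.ofReal_le_ofReal this
  -- Gelfand's formula
  have hG := spectrum.pow_nnnorm_pow_one_div_tendsto_nhds_spectralRadius Cc
  obtain ⟨r, hr1, hr2⟩ := exists_between hρ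
  have hev : ∀ᶠ k : ℕ in atTop, (‖Cc ^ k‖₊ : ℝ≥0∞) ^ (1/(k:ℝ)) < r :=
    hG.eventually (Filter.Tendsto.eventually_lt_const hr1 tendsto_id) |>.mono (fun _ h => h)
  have hle : ∀ᶠ k : ℕ in atTop, (‖Cc ^ k‖₊ : ℝ≥0∞) ≤ r ^ k := by
    filter_upwards [hev, eventually_ge_atTop 1] with k hx hk
    have hk0 : (k:ℝ) ≠ 0 := by positivity
    calc (‖Cc ^ k‖₊ : ℝ≥0∞) = ((‖Cc ^ k‖₊ : ℝ≥0∞) ^ (1/(k:ℝ))) ^ (k:ℝ) := by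
          rw [← ENNReal.rpow_mul, one_div, inv_mul_cancel₀ hk0, ENNReal.rpow_one]
      _ ≤ r ^ (k:ℝ) := ENNReal.rpow_le_rpow hx.le (by positivity)
      _ = r ^ k := ENNReal.rpow_natCast r k
  have hr0 : Tendsto (fun k : ℕ => r ^ k) atTop (nhds 0) :=
    ENNReal.tendsto_pow_atTop_nhds_zero_of_lt_one hr2
  have h0 : Tendsto (fun k : ℕ => (‖Cc ^ k‖₊ : ℝ≥0∞)) atTop (nhds 0) :=
    tendsto_of_tendsto_of_tendsto_of_le_of_le' tendsto_const_nhds hr0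
      (Eventually.of_forall fun _ => zero_le) hle
  have h0'' : Tendsto (fun k : ℕ => ‖Cc ^ k‖₊) atTop (nhds 0) := by
    rw [show (0:ℝ≥0∞) = ((0:ℝ≥0):ℝ≥0∞) from rfl] at h0
    exact ENNReal.tendsto_coe.mp h0
  have h0' : Tendsto (fun k : ℕ => ‖Cc ^ k‖) atTop (nhds 0) := by
    simpa using (NNReal.tendsto_coe (f := atTop)).mpr h0''
  refine squeeze_zero_norm (fun k => ?_) h0'
  have hpow : Cc ^ k = (C ^ k).map (algebraMap ℝ ℂ) := by
    rw [hCc, ← RingHom.mapMatrix_apply, ← RingHom.mapMatrix_apply, ← map_pow]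
  have : ‖(C ^ k) i j‖ = ‖(Cc ^ k) i j‖ := by
    rw [hpow]; simp [Matrix.map_apply, Complex.norm_real]
  rw [this]
  exact specRad_entry_norm_le _ i j

end AuxSpecRad

private lemma specRad_pow_entry_nonneg {n : ℕ} (C : Matrix (Fin n) (Fin n) ℝ)
    (hC : ∀ i j, 0 ≤ C i j) (k : ℕ) (i j : Fin n) : 0 ≤ (C ^ k) i j := by
  induction k generalizing i j with
  | zero => simp only [pow_zero, Matrix.one_apply]; split <;> norm_num
  | succ k ih =>
    rw [pow_succ, Matrix.mul_apply]
    exact Finset.sum_nonneg fun l _ => mul_nonneg (ih i l) (hC l j)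

/-- For a nonnegative matrix `C`, the matrix `I - C` is invertible with a
(entrywise) nonnegative inverse if and only if the spectral radius of `C` is strictly
less than `1`. -/
theorem inv_nonneg_iff_specRad_lt_one
    (n : ℕ) (C : Matrix (Fin n) (Fin n) ℝ) (hC : ∀ i j, 0 ≤ C i j) :
    (IsUnit (1 - C) ∧ ∀ i j, 0 ≤ (1 - C)⁻¹ i j) ↔ specRad C < 1 := by
  set Cc := C.map (algebraMap ℝ ℂ) with hCc
  have hfin : ((fun z : ℂ => ‖z‖) '' spectrum ℂ Cc).Finite := (Matrix.finite_spectrum Cc).image _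
  have hbdd : BddAbove ((fun z : ℂ => ‖z‖) '' spectrum ℂ Cc) := hfin.bddAbove
  constructor
  · -- nonneg inverse → spectral radius < 1
    rintro ⟨hU, hB⟩
    by_contra hlt
    push_neg at hlt  -- 1 ≤ specRad C
    -- the set of absolute values of eigenvalues is nonempty and attains its sup
    have hS : ((fun z : ℂ => ‖z‖) '' spectrum ℂ Cc).Nonempty := by
      by_contra hemp
      rw [Set.not_nonempty_iff_eq_empty] at hemp
      rw [specRad, ← hCc, hemp, Real.sSup_empty] at hlt
      linarith
    obtain ⟨lam, hlam, habs⟩ := hS.csSup_mem hfin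
    have hlam1 : 1 ≤ ‖lam‖ := by
      rw [show ‖lam‖ = _ from habs]; exact hlt
    -- extract an eigenvector
    have h1 : ¬ IsUnit (algebraMap ℂ (Matrix (Fin n) (Fin n) ℂ) lam - Cc) :=
      spectrum.mem_iff.mp hlam
    have hdet : (algebraMap ℂ (Matrix (Fin n) (Fin n) ℂ) lam - Cc).det = 0 := by
      by_contra hd
      exact h1 ((Matrix.isUnit_iff_isUnit_det _).mpr (isUnit_iff_ne_zero.mpr hd))
    obtain ⟨v, hv0, hveq⟩ := (Matrix.exists_mulVec_eq_zero_iff).mpr hdet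
    have hCv : Cc *ᵥ v = lam • v := by
      rw [Matrix.sub_mulVec, Algebra.algebraMap_eq_smul_one, Matrix.smul_mulVec,
        Matrix.one_mulVec, sub_eq_zero] at hveq
      exact hveq.symm
    -- the vector of absolute values
    set u : Fin n → ℝ := fun i => ‖v i‖ with hu
    have hu_nonneg : ∀ i, 0 ≤ u i := fun i => norm_nonneg _
    have key : ∀ i, ((1 - C) *ᵥ u) i ≤ 0 := by
      intro i
      have h2 : ‖(Cc *ᵥ v) i‖ ≤ (C *ᵥ u) i := by
        rw [Matrix.mulVec, dotProduct, Matrix.mulVec, dotProduct]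
        refine le_trans (norm_sum_le _ _) (le_of_eq ?_)
        refine Finset.sum_congr rfl fun l _ => ?_
        rw [norm_mul, hCc]
        simp [Matrix.map_apply, Complex.norm_real, abs_of_nonneg (hC i l), hu]
      have h3 : u i ≤ (C *ᵥ u) i := by
        calc u i ≤ ‖lam‖ * u i :=
              le_mul_of_one_le_left (hu_nonneg i) hlam1
          _ = ‖(Cc *ᵥ v) i‖ := by
              rw [hCv]; simp [hu, _root_.map_mul]
          _ ≤ (C *ᵥ u) i := h2
      rw [Matrix.sub_mulVec, Matrix.one_mulVec]
      simpa using sub_nonpos.mpr h3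
    -- apply the nonnegative inverse
    have hdet1C : IsUnit (1 - C).det := (Matrix.isUnit_iff_isUnit_det _).mp hU
    have hinv : (1 - C)⁻¹ * (1 - C) = 1 := Matrix.nonsing_inv_mul _ hdet1C
    have hu_eq : ∀ i, u i = ((1 - C)⁻¹ *ᵥ ((1 - C) *ᵥ u)) i := by
      intro i
      rw [Matrix.mulVec_mulVec, hinv, Matrix.one_mulVec]
    have hu_nonpos : ∀ i, u i ≤ 0 := by
      intro i
      rw [hu_eq i, Matrix.mulVec, dotProduct]
      exact Finset.sum_nonpos fun l _ => mul_nonpos_of_nonneg_of_nonpos (hB i l) (key l)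
    have : v = 0 := by
      funext i
      have : u i = 0 := le_antisymm (hu_nonpos i) (hu_nonneg i)
      simpa [hu, norm_eq_zero] using this
    exact hv0 this
  · -- spectral radius < 1 → nonneg inverse
    intro h
    -- invertibility
    have hdet : (1 - C).det ≠ 0 := by
      intro h0
      have hdetC : (1 - Cc).det = 0 := by
        have : (1 : Matrix (Fin n) (Fin n) ℂ) - Cc
            = (algebraMap ℝ ℂ).mapMatrix (1 - C) := by
          rw [_root_.map_sub, _root_.map_one, RingHom.mapMatrix_apply, hCc]
        rw [this, ← RingHom.map_det, h0, map_zero]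
      have h1 : (1 : ℂ) ∈ spectrum ℂ Cc := by
        rw [spectrum.mem_iff, _root_.map_one]
        intro hu
        rw [Matrix.isUnit_iff_isUnit_det, isUnit_iff_ne_zero] at hu
        exact hu hdetC
      have : (1:ℝ) ≤ specRad C := by
        rw [specRad, ← hCc]
        exact le_csSup hbdd ⟨1, h1, by simp⟩
      linarith
    have hdetU : IsUnit (1 - C).det := isUnit_iff_ne_zero.mpr hdet
    have hU : IsUnit (1 - C) := (Matrix.isUnit_iff_isUnit_det _).mpr hdetU
    refine ⟨hU, fun i j => ?_⟩
    set B := (1 - C)⁻¹ with hBdef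
    have hBmul : B * (1 - C) = 1 := Matrix.nonsing_inv_mul _ hdetU
    -- Neumann series identity
    have hident : ∀ N : ℕ, B = (∑ k ∈ Finset.range N, C ^ k) + B * C ^ N := by
      intro N
      have h1 : (1 - C) * ∑ k ∈ Finset.range N, C ^ k = 1 - C ^ N := mul_neg_geom_sum C N
      have h2 : B * ((1 - C) * ∑ k ∈ Finset.range N, C ^ k) = B * (1 - C ^ N) := by rw [h1]
      rw [← mul_assoc, hBmul, one_mul, mul_sub, mul_one] at h2
      rw [h2]; abel
    -- the remainder tends to zero entrywise
    have htend : Filter.Tendsto (fun N => (B * C ^ N) i j) Filter.atTop (nhds 0) := by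
      have : ∀ N, (B * C ^ N) i j = ∑ l, B i l * (C ^ N) l j := fun N => Matrix.mul_apply
      simp only [this]
      have := Filter.Tendsto.congr (fun N => rfl)
        (tendsto_finset_sum Finset.univ fun l _ =>
          (specRad_tendsto_entry_pow C h l j).const_mul (B i l))
      simpa using this
    -- partial sums converge to B i j and are nonnegative
    have hsum : Filter.Tendsto (fun N => (∑ k ∈ Finset.range N, C ^ k) i j)
        Filter.atTop (nhds (B i j)) := by
      have heq : ∀ N, (∑ k ∈ Finset.range N, C ^ k) i j = B i j - (B * C ^ N) i j := by
        intro N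
        have := hident N
        have : B i j = ((∑ k ∈ Finset.range N, C ^ k) + B * C ^ N) i j := by rw [← this]
        rw [Matrix.add_apply] at this
        linarith
      simp only [heq]
      simpa using tendsto_const_nhds.sub htend
    refine ge_of_tendsto' hsum fun N => ?_
    rw [Matrix.sum_apply]
    exact Finset.sum_nonneg fun k _ => specRad_pow_entry_nonneg C hC k i j
end

section
/- Let C be an n×n real matrix with nonnegative entries and spectral radius ρ(C) < 1, let K be a diagonal matrix with strictly positive diagonal entries, and set A = K(I − C). Then there exists a diagonal matrix D with strictly positive diagonal entries such that the symmetric matrix Aᵀ D + D A is positive definite. -/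
set_option maxHeartbeats 1000000
open Matrix Finset
open scoped ENNReal NNReal

attribute [local instance] Matrix.linftyOpNormedRing Matrix.linftyOpNormedAlgebra


open Matrix

lemma pow_entry_nonneg {n : ℕ} (C : Matrix (Fin n) (Fin n) ℝ) (hC : ∀ i j, 0 ≤ C i j) :
    ∀ (N : ℕ) i j, 0 ≤ (C ^ N) i j := by
  intro N
  induction N with
  | zero => intro i j; by_cases h : i = j <;> simp [pow_zero, one_apply, h]
  | succ m ih =>
    intro i j
    rw [pow_succ, mul_apply]
    exact Finset.sum_nonneg fun l _ => mul_nonneg (ih i l) (hC l j)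

lemma exists_pos_vec {n : ℕ} (C : Matrix (Fin n) (Fin n) ℝ)
    (hC : ∀ i j, 0 ≤ C i j) (hρ : specRad C < 1) :
    ∃ x : Fin n → ℝ, (∀ i, 0 < x i) ∧ (∀ i, 0 < ((1 - C) *ᵥ x) i) := by
  classical
  set M : Matrix (Fin n) (Fin n) ℂ := C.map (algebraMap ℝ ℂ) with hM
  -- spectral radius < 1
  have hspec : spectralRadius ℂ M < 1 := by
    have hfin : (spectrum ℂ M).Finite := Matrix.finite_spectrum M
    have hbdd : BddAbove ((fun z : ℂ => ‖z‖) '' spectrum ℂ M) := (hfin.image _).bddAbove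
    have hle : spectralRadius ℂ M ≤ ENNReal.ofReal (specRad C) := by
      rw [spectralRadius]
      refine iSup₂_le fun z hz => ?_
      have h1 : ‖z‖ ≤ specRad C := le_csSup hbdd ⟨z, hz, rfl⟩
      have h1' : ‖z‖ ≤ specRad C := h1
      calc (‖z‖₊ : ℝ≥0∞) = ENNReal.ofReal ‖z‖ := (ofReal_norm z).symm
        _ ≤ ENNReal.ofReal (specRad C) := ENNReal.ofReal_le_ofReal h1'
    exact lt_of_le_of_lt hle (ENNReal.ofReal_lt_one.mpr hρ)
  -- Gelfand formula: some power has norm < 1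
  have htend := spectrum.pow_nnnorm_pow_one_div_tendsto_nhds_spectralRadius M
  have hev : ∀ᶠ m : ℕ in Filter.atTop,
      (‖M ^ m‖₊ : ℝ≥0∞) ^ (1 / (m : ℝ)) < 1 :=
    htend.eventually_lt_const hspec
  obtain ⟨N, hm, hNpos⟩ := (hev.and (Filter.eventually_gt_atTop 0)).exists
  have hnorm : ‖M ^ N‖₊ < 1 := by
    by_contra h
    push_neg at h
    have h1 : (1 : ℝ≥0∞) ≤ (‖M ^ N‖₊ : ℝ≥0∞) := by exact_mod_cast h
    have h2 : (1 : ℝ≥0∞) = (1 : ℝ≥0∞) ^ (1 / (N : ℝ)) := by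
      rw [ENNReal.one_rpow]
    have h3 : (1:ℝ≥0∞) ^ (1 / (N : ℝ)) ≤ (‖M ^ N‖₊ : ℝ≥0∞) ^ (1 / (N : ℝ)) := by
      apply ENNReal.rpow_le_rpow h1
      positivity
    rw [← h2] at h3
    exact absurd hm (not_lt.mpr h3)
  -- row sums of C^N are < 1
  have hpowmap : M ^ N = (C ^ N).map (algebraMap ℝ ℂ) := by
    have h := map_pow ((algebraMap ℝ ℂ).mapMatrix) C N
    simp only [RingHom.mapMatrix_apply] at h
    rw [hM, ← h]
  have hrow : ∀ i, ∑ j, (C ^ N) i j < 1 := by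
    intro i
    have h1 : (∑ j, ‖(M ^ N) i j‖₊) < 1 := by
      rw [linfty_opNNNorm_def] at hnorm
      exact lt_of_le_of_lt (Finset.le_sup (f := fun i => ∑ j, ‖(M ^ N) i j‖₊) (Finset.mem_univ i)) hnorm
    have h1' : (∑ j, ‖(M ^ N) i j‖) < 1 := by
      have := NNReal.coe_lt_coe.mpr h1
      push_cast at this
      simpa using this
    have h2 : ∀ j, (C ^ N) i j = ‖(M ^ N) i j‖ := by
      intro j
      rw [hpowmap, Matrix.map_apply]
      rw [show (algebraMap ℝ ℂ) ((C ^ N) i j) = ((C ^ N) i j : ℂ) from rfl]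
      rw [Complex.norm_real, Real.norm_of_nonneg (pow_entry_nonneg C hC N i j)]
    calc ∑ j, (C ^ N) i j = ∑ j, ‖(M ^ N) i j‖ := Finset.sum_congr rfl fun j _ => h2 j
      _ < 1 := h1'
  -- the positive vector
  set x : Fin n → ℝ := (∑ k ∈ Finset.range N, C ^ k) *ᵥ (fun _ => (1:ℝ)) with hx
  have hxi : ∀ i, x i = ∑ k ∈ Finset.range N, ∑ j, (C ^ k) i j := by
    intro i
    rw [hx]
    simp only [Matrix.mulVec, dotProduct, Matrix.sum_apply, mul_one]
    rw [Finset.sum_comm]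
  refine ⟨x, ?_, ?_⟩
  · intro i
    rw [hxi]
    have h0 : ∑ j, ((C ^ 0) : Matrix (Fin n) (Fin n) ℝ) i j = 1 := by
      simp [Matrix.one_apply]
    calc (0:ℝ) < 1 := one_pos
      _ = ∑ j, ((C ^ 0) : Matrix (Fin n) (Fin n) ℝ) i j := h0.symm
      _ ≤ ∑ k ∈ Finset.range N, ∑ j, (C ^ k) i j := by
          refine Finset.single_le_sum (f := fun k => ∑ j, (C ^ k) i j)
            (fun k _ => Finset.sum_nonneg fun j _ => pow_entry_nonneg C hC k i j) ?_
          exact Finset.mem_range.mpr hNpos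
  · intro i
    have hmul : (1 - C) * (∑ k ∈ Finset.range N, C ^ k) = 1 - C ^ N := by
      have h := mul_geom_sum C N
      calc (1 - C) * (∑ k ∈ Finset.range N, C ^ k)
          = -((C - 1) * ∑ k ∈ Finset.range N, C ^ k) := by rw [← neg_sub C 1, neg_mul]
        _ = -(C ^ N - 1) := by rw [h]
        _ = 1 - C ^ N := neg_sub _ _
    have hvec : (1 - C) *ᵥ x = (1 - C ^ N) *ᵥ (fun _ => (1:ℝ)) := by
      rw [hx, mulVec_mulVec, hmul]
    rw [hvec]
    have : ((1 - C ^ N) *ᵥ (fun _ => (1:ℝ))) i = 1 - ∑ j, (C ^ N) i j := by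
      simp only [Matrix.mulVec, dotProduct, Matrix.sub_apply, mul_one, Finset.sum_sub_distrib]
      congr 1
      simp [Matrix.one_apply]
    rw [this]
    linarith [hrow i]


lemma spectrum_transpose' {n : ℕ} (A : Matrix (Fin n) (Fin n) ℂ) :
    spectrum ℂ Aᵀ = spectrum ℂ A := by
  ext z
  have key : ∀ B : Matrix (Fin n) (Fin n) ℂ, IsUnit Bᵀ ↔ IsUnit B := by
    intro B
    rw [Matrix.isUnit_iff_isUnit_det, Matrix.isUnit_iff_isUnit_det, Matrix.det_transpose]
  simp only [spectrum.mem_iff]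
  have h : algebraMap ℂ (Matrix (Fin n) (Fin n) ℂ) z - Aᵀ
      = (algebraMap ℂ (Matrix (Fin n) (Fin n) ℂ) z - A)ᵀ := by
    rw [Matrix.transpose_sub]
    congr 1
    rw [Matrix.algebraMap_eq_diagonal, Matrix.diagonal_transpose]
  rw [h, key]

lemma specRad_transpose {n : ℕ} (C : Matrix (Fin n) (Fin n) ℝ) :
    specRad Cᵀ = specRad C := by
  rw [specRad, specRad,
    show Cᵀ.map (algebraMap ℝ ℂ) = (C.map (algebraMap ℝ ℂ))ᵀ from rfl, spectrum_transpose']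

lemma posDef_of_offdiag_nonpos {n : ℕ} (S : Matrix (Fin n) (Fin n) ℝ)
    (hsym : Sᵀ = S) (hoff : ∀ i j, i ≠ j → S i j ≤ 0)
    (z : Fin n → ℝ) (hz : ∀ i, 0 < z i) (hSz : ∀ i, 0 < (S *ᵥ z) i) :
    S.PosDef := by
  rw [posDef_iff_dotProduct_mulVec]
  have hs : ∀ i j, S j i = S i j := fun i j => by
    simpa using congrFun (congrFun hsym i) j
  constructor
  · ext i j
    simp [conjTranspose_apply, hs]
  · intro u hu
    set w : Fin n → ℝ := fun i => u i / z i with hw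
    have hu' : ∀ i, u i = z i * w i := by
      intro i
      have hzi := (hz i).ne'
      rw [hw]
      field_simp
    set T : Fin n → Fin n → ℝ := fun i j => S i j * z i * z j with hT
    have hTsym : ∀ i j, T j i = T i j := fun i j => by simp only [hT, hs i j]; ring
    set Q : ℝ := ∑ i, ∑ j, T i j * (w i * w j) with hQ
    set A : ℝ := ∑ i, ∑ j, T i j * (w i)^2 with hA
    set A' : ℝ := ∑ i, ∑ j, T i j * (w j)^2 with hA'
    set B : ℝ := ∑ i, ∑ j, T i j * (w i - w j)^2 with hB
    set A0 : ℝ := ∑ i, (z i * (S *ᵥ z) i) * (w i)^2 with hA0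
    have hAA0 : A = A0 := by
      rw [hA, hA0]
      refine Finset.sum_congr rfl fun i _ => ?_
      simp only [mulVec, dotProduct, Finset.mul_sum, Finset.sum_mul]
      exact Finset.sum_congr rfl fun j _ => by simp only [hT]; ring
    have hA'A : A' = A := by
      rw [hA', hA, Finset.sum_comm]
      exact Finset.sum_congr rfl fun i _ => Finset.sum_congr rfl fun j _ => by
        rw [hTsym]
    have hBeq : B = A - 2*Q + A' := by
      rw [hB, hA, hQ, hA']
      calc ∑ i, ∑ j, T i j * (w i - w j)^2
          = ∑ i, ∑ j, (T i j * (w i)^2 - 2*(T i j * (w i * w j)) + T i j * (w j)^2) :=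
            Finset.sum_congr rfl fun i _ => Finset.sum_congr rfl fun j _ => by ring
        _ = _ := by
            simp only [Finset.sum_add_distrib, Finset.sum_sub_distrib, Finset.mul_sum]
    have hQeq : Q = A0 - B/2 := by
      rw [hAA0] at hBeq; rw [hA'A, hAA0] at hBeq; linarith
    have hBle : B ≤ 0 := by
      rw [hB]
      refine Finset.sum_nonpos fun i _ => Finset.sum_nonpos fun j _ => ?_
      rcases eq_or_ne i j with rfl | hij
      · simp
      · have hTij : T i j ≤ 0 :=
          mul_nonpos_of_nonpos_of_nonneg
            (mul_nonpos_of_nonpos_of_nonneg (hoff i j hij) (hz i).le) (hz j).le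
        exact mul_nonpos_of_nonpos_of_nonneg hTij (sq_nonneg _)
    have hA0pos : 0 < A0 := by
      obtain ⟨i0, hi0⟩ := Function.ne_iff.mp hu
      have hi0' : u i0 ≠ 0 := by simpa using hi0
      rw [hA0]
      refine Finset.sum_pos' (fun i _ => ?_) ⟨i0, Finset.mem_univ i0, ?_⟩
      · exact mul_nonneg (mul_nonneg (hz i).le (hSz i).le) (sq_nonneg _)
      · have hwi : w i0 ≠ 0 := by
          rw [hw]; exact div_ne_zero hi0' (hz i0).ne'
        have : 0 < (w i0)^2 := lt_of_le_of_ne (sq_nonneg _) (Ne.symm (pow_ne_zero 2 hwi))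
        exact mul_pos (mul_pos (hz i0) (hSz i0)) this
    have hform : u ⬝ᵥ (S *ᵥ u) = Q := by
      rw [hQ]
      simp only [dotProduct, mulVec, Finset.mul_sum]
      exact Finset.sum_congr rfl fun i _ => Finset.sum_congr rfl fun j _ => by
        rw [hu' i, hu' j]; simp only [hT]; ring
    have : 0 < u ⬝ᵥ (S *ᵥ u) := by rw [hform, hQeq]; linarith
    simpa using this

/-- If `C` is nonnegative with spectral radius `< 1` and `K = diagonal k`
has strictly positive diagonal entries, then for `A = K (I - C)` there exists a positive
diagonal matrix `D = diagonal d` such that `Aᵀ D + D A` is positive definite. -/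
theorem exists_posDiag_lyapunov
    (n : ℕ) (C : Matrix (Fin n) (Fin n) ℝ) (hC : ∀ i j, 0 ≤ C i j)
    (hρ : specRad C < 1)
    (k : Fin n → ℝ) (hk : ∀ i, 0 < k i) :
    ∃ d : Fin n → ℝ, (∀ i, 0 < d i) ∧
      ((Matrix.diagonal k * (1 - C))ᵀ * Matrix.diagonal d +
        Matrix.diagonal d * (Matrix.diagonal k * (1 - C))).PosDef := by
  obtain ⟨x, hxpos, hx⟩ := exists_pos_vec C hC hρ
  obtain ⟨y, hypos, hy⟩ := exists_pos_vec Cᵀ (fun i j => hC j i)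
    (by rw [specRad_transpose]; exact hρ)
  set d : Fin n → ℝ := fun i => y i / (x i * k i) with hd
  have hdpos : ∀ i, 0 < d i := fun i => div_pos (hypos i) (mul_pos (hxpos i) (hk i))
  refine ⟨d, hdpos, ?_⟩
  set S := (Matrix.diagonal k * (1 - C))ᵀ * Matrix.diagonal d +
        Matrix.diagonal d * (Matrix.diagonal k * (1 - C)) with hS
  have hSentry : ∀ i j, S i j =
      k j * ((1 - C) j i) * d j + d i * (k i * ((1 - C) i j)) := by
    intro i j
    rw [hS]
    simp only [Matrix.add_apply, Matrix.mul_diagonal, Matrix.diagonal_mul,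
      Matrix.transpose_apply]
  have hsym : Sᵀ = S := by
    ext i j
    rw [Matrix.transpose_apply, hSentry, hSentry]
    ring
  have hoff : ∀ i j, i ≠ j → S i j ≤ 0 := by
    intro i j hij
    have e1 : (1 - C) j i = -(C j i) := by
      simp [Matrix.sub_apply, Matrix.one_apply_ne (Ne.symm hij)]
    have e2 : (1 - C) i j = -(C i j) := by
      simp [Matrix.sub_apply, Matrix.one_apply_ne hij]
    have p1 : 0 ≤ k j * C j i * d j :=
      mul_nonneg (mul_nonneg (hk j).le (hC j i)) (hdpos j).le
    have p2 : 0 ≤ d i * (k i * C i j) :=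
      mul_nonneg (hdpos i).le (mul_nonneg (hk i).le (hC i j))
    have : S i j = -(k j * C j i * d j) - d i * (k i * C i j) := by
      rw [hSentry, e1, e2]; ring
    rw [this]
    linarith
  have hSx : ∀ i, 0 < (S *ᵥ x) i := by
    intro i
    have hcancel : ∀ j, k j * ((1 - C) j i) * d j * x j = ((1 - C) j i) * y j := by
      intro j
      have hkj := (hk j).ne'
      have hxj := (hxpos j).ne'
      rw [hd]
      field_simp
    have hstep : (S *ᵥ x) i =
        (∑ j, ((1 - C) j i) * y j) + d i * k i * (∑ j, ((1 - C) i j) * x j) := by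
      simp only [Matrix.mulVec, dotProduct]
      calc ∑ j, S i j * x j
          = ∑ j, (((1 - C) j i) * y j + d i * k i * (((1 - C) i j) * x j)) := by
            refine Finset.sum_congr rfl fun j _ => ?_
            rw [hSentry i j, add_mul, hcancel j]
            ring
        _ = _ := by rw [Finset.sum_add_distrib, Finset.mul_sum]
    have h1 : ∑ j, ((1 - C) j i) * y j = ((1 - Cᵀ) *ᵥ y) i := by
      simp only [Matrix.mulVec, dotProduct, Matrix.sub_apply, Matrix.transpose_apply]
      refine Finset.sum_congr rfl fun j _ => ?_
      by_cases h : i = j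
      · subst h; rfl
      · rw [Matrix.one_apply_ne h, Matrix.one_apply_ne (Ne.symm h)]
    have h2 : ∑ j, ((1 - C) i j) * x j = ((1 - C) *ᵥ x) i := by
      simp only [Matrix.mulVec, dotProduct]
    rw [hstep, h1]
    have hp2 : 0 < d i * k i * (∑ j, ((1 - C) i j) * x j) := by
      rw [h2]
      exact mul_pos (mul_pos (hdpos i) (hk i)) (hx i)
    have := hy i
    linarith
  exact posDef_of_offdiag_nonpos S hsym hoff x hxpos hSx
end

section
/- Let C be an n×n real matrix with nonnegative entries and spectral radius ρ(C) < 1, and let K be a diagonal matrix with strictly positive diagonal entries. Then every complex eigenvalue of the matrix A = K(I − C) has strictly positive real part; equivalently, −K(I − C) is a Hurwitz (stable) matrix. -/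
open Matrix

section aux

attribute [local instance] Matrix.linftyOpNormedRing Matrix.linftyOpNormedAlgebra
  Matrix.linftyOpNormedSpace

lemma pow_entries_nonneg' {n : ℕ} (C : Matrix (Fin n) (Fin n) ℝ) (hC : ∀ i j, 0 ≤ C i j)
    (m : ℕ) : ∀ i j, 0 ≤ (C ^ m) i j := by
  induction m with
  | zero => intro i j; by_cases h : i = j <;> simp [pow_zero, Matrix.one_apply, h]
  | succ m ih =>
    intro i j
    rw [pow_succ, Matrix.mul_apply]
    exact Finset.sum_nonneg fun l _ => mul_nonneg (ih i l) (hC l j)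

lemma key_aux (n : ℕ) (C : Matrix (Fin n) (Fin n) ℝ) (hC : ∀ i j, 0 ≤ C i j)
    (hρ : specRad C < 1) (k : Fin n → ℝ) (hk : ∀ i, 0 < k i)
    (μ : ℂ) (hμ : μ ∈ spectrum ℂ ((Matrix.diagonal k * (1 - C)).map (algebraMap ℝ ℂ)))
    (hre : μ.re ≤ 0) : False := by
  classical
  have hMap : (Matrix.diagonal k * (1 - C)).map (algebraMap ℝ ℂ)
      = Matrix.diagonal (fun i => (k i : ℂ)) * (1 - C.map (algebraMap ℝ ℂ)) := by
    calc (Matrix.diagonal k * (1 - C)).map (algebraMap ℝ ℂ)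
        = (algebraMap ℝ ℂ).mapMatrix (Matrix.diagonal k * (1 - C)) := rfl
      _ = (algebraMap ℝ ℂ).mapMatrix (Matrix.diagonal k)
            * ((algebraMap ℝ ℂ).mapMatrix 1 - (algebraMap ℝ ℂ).mapMatrix C) := by
          rw [_root_.map_mul, _root_.map_sub]
      _ = _ := by
          rw [_root_.map_one]
          simp only [RingHom.mapMatrix_apply]
          rw [Matrix.diagonal_map (map_zero _)]
          rfl
  rw [hMap] at hμ
  set C' := C.map (algebraMap ℝ ℂ) with hC'def
  rw [spectrum.mem_iff] at hμ
  have hdet : (algebraMap ℂ (Matrix (Fin n) (Fin n) ℂ) μ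
      - Matrix.diagonal (fun i => (k i : ℂ)) * (1 - C')).det = 0 := by
    by_contra h
    exact hμ ((Matrix.isUnit_iff_isUnit_det _).2 (isUnit_iff_ne_zero.2 h))
  obtain ⟨x, hx0, hx⟩ := (Matrix.exists_mulVec_eq_zero_iff).2 hdet
  have hmv : (algebraMap ℂ (Matrix (Fin n) (Fin n) ℂ) μ).mulVec x
      = (Matrix.diagonal (fun i => (k i : ℂ)) * (1 - C')).mulVec x := by
    rw [Matrix.sub_mulVec] at hx
    exact sub_eq_zero.mp hx
  have heig : ∀ i, (k i : ℂ) * (x i - (C'.mulVec x) i) = μ * x i := by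
    intro i
    have h1 := congrFun hmv i
    have h2 : (algebraMap ℂ (Matrix (Fin n) (Fin n) ℂ) μ).mulVec x i = μ * x i := by
      simp [Algebra.algebraMap_eq_smul_one, Matrix.smul_mulVec, Matrix.one_mulVec]
    have h3 : (Matrix.diagonal (fun i => (k i : ℂ)) * (1 - C')).mulVec x i
        = (k i : ℂ) * (x i - (C'.mulVec x) i) := by
      rw [← Matrix.mulVec_mulVec, Matrix.mulVec_diagonal]
      congr 1
      simp [Matrix.sub_mulVec, Matrix.one_mulVec]
    rw [h2, h3] at h1
    exact h1.symm
  set v : Fin n → ℝ := fun i => ‖x i‖ with hvdef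
  have hvnn : ∀ i, 0 ≤ v i := fun i => norm_nonneg _
  have hvle : ∀ i, v i ≤ C.mulVec v i := by
    intro i
    have hki : (k i : ℂ) ≠ 0 := by exact_mod_cast (hk i).ne'
    have h4 : x i - (C'.mulVec x) i = μ / (k i : ℂ) * x i := by
      field_simp
      linear_combination heig i
    have heq : (1 - μ / (k i : ℂ)) * x i = (C'.mulVec x) i := by
      linear_combination h4
    have habs1 : 1 ≤ ‖1 - μ / (k i : ℂ)‖ := by
      have hrez : (μ / (k i : ℂ)).re ≤ 0 := by
        rw [Complex.div_ofReal_re]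
        exact div_nonpos_of_nonpos_of_nonneg hre (hk i).le
      have hns : (1:ℝ) ≤ Complex.normSq (1 - μ / (k i : ℂ)) := by
        rw [Complex.normSq_apply]
        simp only [Complex.sub_re, Complex.sub_im, Complex.one_re, Complex.one_im]
        nlinarith [sq_nonneg ((μ / (k i : ℂ)).im)]
      calc (1:ℝ) = Real.sqrt 1 := Real.sqrt_one.symm
        _ ≤ Real.sqrt (Complex.normSq (1 - μ / (k i : ℂ))) := Real.sqrt_le_sqrt hns
        _ = ‖1 - μ / (k i : ℂ)‖ := by rw [Complex.norm_def]
    calc v i ≤ ‖1 - μ / (k i : ℂ)‖ * v i :=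
          le_mul_of_one_le_left (hvnn i) habs1
      _ = ‖(1 - μ / (k i : ℂ)) * x i‖ := (norm_mul _ _).symm
      _ = ‖(C'.mulVec x) i‖ := by rw [heq]
      _ ≤ ∑ j, C i j * v j := by
          rw [Matrix.mulVec, dotProduct]
          refine (norm_sum_le _ _).trans (le_of_eq ?_)
          refine Finset.sum_congr rfl fun j _ => ?_
          rw [norm_mul]
          simp [hC'def, hvdef, Matrix.map_apply, Complex.norm_real, Real.norm_eq_abs,
            abs_of_nonneg (hC i j)]
      _ = C.mulVec v i := by rw [Matrix.mulVec, dotProduct]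
  -- iterate: v ≤ C^m v entrywise
  have hvm : ∀ m i, v i ≤ ((C ^ m).mulVec v) i := by
    intro m
    induction m with
    | zero => intro i; simp [Matrix.one_mulVec]
    | succ m ih =>
      intro i
      have h5 : ((C ^ m).mulVec v) i ≤ ((C ^ m).mulVec (C.mulVec v)) i := by
        rw [Matrix.mulVec, Matrix.mulVec, dotProduct, dotProduct]
        exact Finset.sum_le_sum fun j _ =>
          mul_le_mul_of_nonneg_left (hvle j) (pow_entries_nonneg' C hC m i j)
      calc v i ≤ ((C ^ m).mulVec v) i := ih i
        _ ≤ ((C ^ m).mulVec (C.mulVec v)) i := h5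
        _ = ((C ^ (m+1)).mulVec v) i := by rw [Matrix.mulVec_mulVec, ← pow_succ]
  -- a maximizing index
  have hex : ∃ i, x i ≠ 0 := Function.ne_iff.mp hx0
  haveI : Nonempty (Fin n) := ⟨hex.choose⟩
  obtain ⟨i0, hi0⟩ := Finite.exists_max v
  have hvpos : 0 < v i0 := by
    obtain ⟨i, hi⟩ := hex
    exact lt_of_lt_of_le (by simpa [hvdef] using norm_pos_iff.mpr hi) (hi0 i)
  -- row sums of powers are at least 1
  have hrow : ∀ m, 1 ≤ ∑ j, (C ^ m) i0 j := by
    intro m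
    have h6 : v i0 ≤ (∑ j, (C ^ m) i0 j) * v i0 := by
      calc v i0 ≤ ((C ^ m).mulVec v) i0 := hvm m i0
        _ = ∑ j, (C ^ m) i0 j * v j := by rw [Matrix.mulVec, dotProduct]
        _ ≤ ∑ j, (C ^ m) i0 j * v i0 := Finset.sum_le_sum fun j _ =>
            mul_le_mul_of_nonneg_left (hi0 j) (pow_entries_nonneg' C hC m i0 j)
        _ = (∑ j, (C ^ m) i0 j) * v i0 := (Finset.sum_mul _ _ _).symm
    have h7 : 1 * v i0 ≤ (∑ j, (C ^ m) i0 j) * v i0 := by rw [one_mul]; exact h6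
    exact le_of_mul_le_mul_right h7 hvpos
  -- norm of powers at least 1
  have hnorm : ∀ m, (1 : NNReal) ≤ ‖C' ^ m‖₊ := by
    intro m
    have hCm : C' ^ m = (C ^ m).map (algebraMap ℝ ℂ) := by
      rw [hC'def]
      exact (map_pow ((algebraMap ℝ ℂ).mapMatrix) C m).symm
    rw [hCm, Matrix.linfty_opNNNorm_def]
    refine le_trans ?_ (Finset.le_sup (Finset.mem_univ i0))
    rw [← NNReal.coe_le_coe]
    push_cast
    calc (1:ℝ) ≤ ∑ j, (C ^ m) i0 j := hrow m
      _ = ∑ j, ‖((C ^ m).map (algebraMap ℝ ℂ)) i0 j‖ := by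
          refine Finset.sum_congr rfl fun j _ => ?_
          simp [Matrix.map_apply, Complex.norm_real, Real.norm_eq_abs,
            abs_of_nonneg (pow_entries_nonneg' C hC m i0 j)]
  -- Gelfand's formula gives spectral radius ≥ 1
  have hT := spectrum.pow_nnnorm_pow_one_div_tendsto_nhds_spectralRadius C'
  have hge : (1 : ENNReal) ≤ spectralRadius ℂ C' := by
    refine ge_of_tendsto hT ?_
    filter_upwards [Filter.eventually_ge_atTop 1] with m hm
    refine ENNReal.one_le_rpow ?_ ?_
    · exact_mod_cast hnorm m
    · positivity
  -- but spectral radius ≤ specRad C < 1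
  have hbdd : BddAbove ((fun z : ℂ => ‖z‖) '' spectrum ℂ C') := by
    obtain ⟨R, hR⟩ := (Metric.isBounded_iff_subset_closedBall 0).mp (spectrum.isBounded (𝕜 := ℂ) C')
    refine ⟨R, ?_⟩
    rintro _ ⟨z, hz, rfl⟩
    have := hR hz
    rwa [Metric.mem_closedBall, dist_zero_right] at this
  have hub : spectralRadius ℂ C' ≤ ENNReal.ofReal (specRad C) := by
    rw [spectralRadius]
    refine iSup₂_le fun z hz => ?_
    rw [← ENNReal.ofReal_coe_nnreal, coe_nnnorm]
    refine ENNReal.ofReal_le_ofReal ?_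
    exact le_csSup hbdd ⟨z, hz, rfl⟩
  have : (1 : ENNReal) ≤ ENNReal.ofReal (specRad C) := le_trans hge hub
  exact absurd this (not_le.mpr (ENNReal.ofReal_lt_one.mpr hρ))

end aux

/-- If `C` is nonnegative with spectral radius `< 1` and `K = diagonal k`
has strictly positive diagonal entries, then every complex eigenvalue of
`A = K (I - C)` has strictly positive real part; equivalently, `-K (I - C)` is a
Hurwitz (stable) matrix: all its complex eigenvalues have strictly negative real part. -/
theorem eigenvalues_pos_re_of_D_stability
    (n : ℕ) (C : Matrix (Fin n) (Fin n) ℝ) (hC : ∀ i j, 0 ≤ C i j)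
    (hρ : specRad C < 1)
    (k : Fin n → ℝ) (hk : ∀ i, 0 < k i) :
    (∀ μ ∈ spectrum ℂ ((Matrix.diagonal k * (1 - C)).map (algebraMap ℝ ℂ)), 0 < μ.re) ∧
    (∀ μ ∈ spectrum ℂ ((-(Matrix.diagonal k * (1 - C))).map (algebraMap ℝ ℂ)), μ.re < 0) := by
  have main : ∀ μ ∈ spectrum ℂ ((Matrix.diagonal k * (1 - C)).map (algebraMap ℝ ℂ)), 0 < μ.re := by
    intro μ hμ
    by_contra h
    exact key_aux n C hC hρ k hk μ hμ (not_lt.mp h)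
  refine ⟨main, fun μ hμ => ?_⟩
  have hmapneg : (-(Matrix.diagonal k * (1 - C))).map (algebraMap ℝ ℂ)
      = -((Matrix.diagonal k * (1 - C)).map (algebraMap ℝ ℂ)) := by
    ext i j
    simp [Matrix.map_apply]
  rw [hmapneg, ← spectrum.neg_eq] at hμ
  have hneg : -μ ∈ spectrum ℂ ((Matrix.diagonal k * (1 - C)).map (algebraMap ℝ ℂ)) :=
    Set.mem_neg.mp hμ
  have := main (-μ) hneg
  simp only [Complex.neg_re] at this
  linarith
end

section
/- Let A be an n×n real matrix and suppose there exists a diagonal matrix D with strictly positive diagonal entries such that Aᵀ D + D A is positive definite. Then every differentiable function e : ℝ → ℝⁿ satisfying e'(t) = −A e(t) for all t ≥ 0 converges to 0 as t → ∞. -/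
open Matrix

theorem quad_lb_aux {n : ℕ} (M : Matrix (Fin n) (Fin n) ℝ) (hpd : M.PosDef)
    (d : Fin n → ℝ) (hd : ∀ i, 0 < d i) :
    ∃ c > 0, ∀ x : Fin n → ℝ, c * (∑ i, d i * x i ^ 2) ≤ x ⬝ᵥ (M *ᵥ x) := by
  rcases Nat.eq_zero_or_pos n with hn | hn
  · subst hn
    exact ⟨1, one_pos, fun x => by simp [dotProduct]⟩
  have hposQ : ∀ x : Fin n → ℝ, x ≠ 0 → 0 < x ⬝ᵥ (M *ᵥ x) := fun x hx => by
    simpa [star_trivial] using hpd.dotProduct_mulVec_pos hx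
  obtain ⟨dm, hdm, hdmle⟩ : ∃ dm > 0, ∀ i, dm ≤ d i := by
    obtain ⟨i0, hi0⟩ := Finset.exists_min_image Finset.univ d ⟨⟨0, hn⟩, Finset.mem_univ _⟩
    exact ⟨d i0, hd i0, fun i => hi0.2 i (Finset.mem_univ i)⟩
  have hQcont : Continuous fun x : Fin n → ℝ => x ⬝ᵥ (M *ᵥ x) := by
    simp only [dotProduct, mulVec]
    fun_prop
  have hWc : Continuous fun x : Fin n → ℝ => ∑ i, d i * x i ^ 2 := by fun_prop
  set S : Set (Fin n → ℝ) := {x | ∑ i, d i * x i ^ 2 = 1} with hS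
  have hclosed : IsClosed S := isClosed_eq hWc continuous_const
  have hbdd : Bornology.IsBounded S := by
    apply (Metric.isBounded_closedBall (x := (0 : Fin n → ℝ)) (r := Real.sqrt dm⁻¹)).subset
    intro x hx
    rw [Metric.mem_closedBall, dist_zero_right,
      pi_norm_le_iff_of_nonneg (Real.sqrt_nonneg _)]
    intro i
    have h1 : d i * x i ^ 2 ≤ 1 := by
      rw [← hx]
      exact Finset.single_le_sum (f := fun j => d j * x j ^ 2)
        (fun j _ => mul_nonneg (hd j).le (sq_nonneg _)) (Finset.mem_univ i)
    have h2 : x i ^ 2 ≤ dm⁻¹ := by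
      rw [← one_div, le_div_iff₀ hdm]
      nlinarith [hdmle i, sq_nonneg (x i)]
    calc ‖x i‖ = Real.sqrt (x i ^ 2) := by rw [Real.sqrt_sq_eq_abs]; rfl
      _ ≤ Real.sqrt dm⁻¹ := Real.sqrt_le_sqrt h2
  have hcompact : IsCompact S := Metric.isCompact_of_isClosed_isBounded hclosed hbdd
  have hne : S.Nonempty := by
    refine ⟨(Pi.single (⟨0, hn⟩ : Fin n) (Real.sqrt (d ⟨0, hn⟩)⁻¹) : Fin n → ℝ), ?_⟩
    have h5 : ∑ i, d i *
        ((Pi.single (⟨0, hn⟩ : Fin n) (Real.sqrt (d ⟨0, hn⟩)⁻¹) : Fin n → ℝ) i) ^ 2 = 1 := by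
      rw [Fintype.sum_eq_single (⟨0, hn⟩ : Fin n)
        (fun j hj => by simp [Pi.single_eq_of_ne hj])]
      simp [Real.sq_sqrt (inv_pos.mpr (hd _)).le, Real.sq_sqrt (hd _).le,
        mul_inv_cancel₀ (hd _).ne']
    exact h5
  obtain ⟨z, hzS, hz⟩ := hcompact.exists_isMinOn hne hQcont.continuousOn
  have hz0 : z ≠ 0 := by
    intro h
    have : (0:ℝ) = 1 := by simpa [hS, h] using hzS
    norm_num at this
  have hc : 0 < z ⬝ᵥ (M *ᵥ z) := hposQ z hz0
  have hQscale : ∀ (s : ℝ) (x : Fin n → ℝ),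
      (s • x) ⬝ᵥ (M *ᵥ (s • x)) = s ^ 2 * (x ⬝ᵥ (M *ᵥ x)) := by
    intro s x
    rw [smul_dotProduct, mulVec_smul, dotProduct_smul]
    simp only [smul_eq_mul]; ring
  have hWscale : ∀ (s : ℝ) (x : Fin n → ℝ),
      ∑ i, d i * ((s • x) i) ^ 2 = s ^ 2 * ∑ i, d i * x i ^ 2 := by
    intro s x
    rw [Finset.mul_sum]
    exact Finset.sum_congr rfl fun i _ => by
      simp only [Pi.smul_apply, smul_eq_mul, mul_pow]; ring
  refine ⟨z ⬝ᵥ (M *ᵥ z), hc, fun x => ?_⟩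
  rcases eq_or_ne x 0 with rfl | hx
  · simp [dotProduct]
  · have hWx : 0 < ∑ i, d i * x i ^ 2 := by
      obtain ⟨i, hi⟩ : ∃ i, x i ≠ 0 := by
        by_contra h; push_neg at h; exact hx (funext h)
      have h0 : 0 < d i * x i ^ 2 := mul_pos (hd i) (by positivity)
      exact lt_of_lt_of_le h0 (Finset.single_le_sum (f := fun j => d j * x j ^ 2)
        (fun j _ => mul_nonneg (hd j).le (sq_nonneg _)) (Finset.mem_univ i))
    set a : ℝ := Real.sqrt (∑ i, d i * x i ^ 2) with ha
    have ha0 : 0 < a := Real.sqrt_pos.mpr hWx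
    have ha2 : a ^ 2 = ∑ i, d i * x i ^ 2 := Real.sq_sqrt hWx.le
    have hyS : a⁻¹ • x ∈ S := by
      show ∑ i, d i * ((a⁻¹ • x) i) ^ 2 = 1
      rw [hWscale, ← ha2]
      field_simp
    have hQy : z ⬝ᵥ (M *ᵥ z) ≤ (a⁻¹ • x) ⬝ᵥ (M *ᵥ (a⁻¹ • x)) := hz hyS
    rw [hQscale] at hQy
    have h4 : (a⁻¹) ^ 2 * a ^ 2 = 1 := by field_simp
    have h6 := mul_le_mul_of_nonneg_right hQy (sq_nonneg a)
    calc (z ⬝ᵥ (M *ᵥ z)) * (∑ i, d i * x i ^ 2)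
        = (z ⬝ᵥ (M *ᵥ z)) * a ^ 2 := by rw [ha2]
      _ ≤ a⁻¹ ^ 2 * (x ⬝ᵥ (M *ᵥ x)) * a ^ 2 := h6
      _ = (x ⬝ᵥ (M *ᵥ x)) * (a⁻¹ ^ 2 * a ^ 2) := by ring
      _ = x ⬝ᵥ (M *ᵥ x) := by rw [h4, mul_one]

theorem lyap_alg_aux {n : ℕ} (A : Matrix (Fin n) (Fin n) ℝ) (d : Fin n → ℝ)
    (x : Fin n → ℝ) :
    ∑ i, d i * (2 * x i * (-(A *ᵥ x)) i)
      = -(x ⬝ᵥ ((Aᵀ * Matrix.diagonal d + Matrix.diagonal d * A) *ᵥ x)) := by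
  simp only [Pi.neg_apply, dotProduct, mulVec, Matrix.add_apply, Matrix.mul_diagonal,
    Matrix.diagonal_mul, Matrix.transpose_apply, add_mul, mul_add, Finset.sum_add_distrib,
    Finset.mul_sum, mul_neg, Finset.sum_neg_distrib, neg_add]
  ring_nf
  have h : ∑ i, ∑ j, x i * A j i * d j * x j = ∑ i, ∑ j, x i * d i * A i j * x j := by
    rw [Finset.sum_comm]
    exact Finset.sum_congr rfl fun i _ => Finset.sum_congr rfl fun j _ => by ring
  rw [h]
  have h2 : ∑ i, ∑ j, d i * x i * A i j * x j * 2
      = (∑ i, ∑ j, x i * d i * A i j * x j) + (∑ i, ∑ j, x i * d i * A i j * x j) := by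
    rw [← Finset.sum_add_distrib]
    exact Finset.sum_congr rfl fun i _ => by
      rw [← Finset.sum_add_distrib]
      exact Finset.sum_congr rfl fun j _ => by ring
  rw [h2]
  ring

/-- If there is a diagonal matrix `D = diagonal d` with strictly positive
diagonal entries such that `Aᵀ D + D A` is positive definite, then every differentiable
function `e : ℝ → ℝⁿ` satisfying `e'(t) = -A e(t)` for all `t ≥ 0` converges to `0` as
`t → ∞`. -/
theorem tendsto_zero_of_diagonal_lyapunov
    (n : ℕ) (A : Matrix (Fin n) (Fin n) ℝ)
    (d : Fin n → ℝ) (hd : ∀ i, 0 < d i)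
    (hpd : (Aᵀ * Matrix.diagonal d + Matrix.diagonal d * A).PosDef)
    (e : ℝ → Fin n → ℝ) (hdiff : Differentiable ℝ e)
    (he : ∀ t : ℝ, 0 ≤ t → deriv e t = -(A *ᵥ e t)) :
    Filter.Tendsto e Filter.atTop (nhds 0) := by
  obtain ⟨c, hc, hQ⟩ := quad_lb_aux _ hpd d hd
  set M := Aᵀ * Matrix.diagonal d + Matrix.diagonal d * A with hM
  set V : ℝ → ℝ := fun t => ∑ i, d i * (e t i) ^ 2 with hV
  have hV0 : ∀ t, 0 ≤ V t := fun t =>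
    Finset.sum_nonneg fun i _ => mul_nonneg (hd i).le (sq_nonneg _)
  have hVd : ∀ t, HasDerivAt V (∑ i, d i * (2 * e t i * deriv e t i)) t := by
    intro t
    have h2 : ∀ i, HasDerivAt (fun s => e s i) (deriv e t i) t :=
      hasDerivAt_pi.mp (hdiff t).hasDerivAt
    exact HasDerivAt.fun_sum fun i _ => by
      have h3 := ((h2 i).pow 2).const_mul (d i)
      norm_num at h3
      convert h3 using 2

  have hderiv_sum : ∀ t : ℝ, 0 ≤ t →
      (∑ i, d i * (2 * e t i * deriv e t i)) = -(e t ⬝ᵥ (M *ᵥ e t)) := by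
    intro t ht
    rw [he t ht]
    exact lyap_alg_aux A d (e t)
  set g : ℝ → ℝ := fun t => V t * Real.exp (c * t) with hg
  have hgd : ∀ t, HasDerivAt g ((∑ i, d i * (2 * e t i * deriv e t i)) * Real.exp (c * t)
      + V t * (c * Real.exp (c * t))) t := by
    intro t
    have hexp : HasDerivAt (fun s => Real.exp (c * s)) (c * Real.exp (c * t)) t := by
      have h := (Real.hasDerivAt_exp (c * t)).comp t ((hasDerivAt_id t).const_mul c)
      simpa [mul_comm, Function.comp_def] using h
    exact (hVd t).mul hexp
  have hanti : AntitoneOn g (Set.Ici (0 : ℝ)) := by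
    apply antitoneOn_of_deriv_nonpos (convex_Ici 0)
    · exact (Continuous.continuousOn (by
        have : Differentiable ℝ g := fun t => (hgd t).differentiableAt
        exact this.continuous))
    · intro t _
      exact (hgd t).differentiableAt.differentiableWithinAt
    · intro t ht
      rw [interior_Ici, Set.mem_Ioi] at ht
      rw [(hgd t).deriv, hderiv_sum t ht.le]
      have h7 := hQ (e t)
      have h8 := Real.exp_pos (c * t)
      nlinarith [mul_le_mul_of_nonneg_right h7 (Real.exp_pos (c * t)).le]
  have hbound : ∀ t : ℝ, 0 ≤ t → V t ≤ V 0 * Real.exp (-(c * t)) := by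
    intro t ht
    have h1 : g t ≤ g 0 := hanti Set.self_mem_Ici ht ht
    have h2 : V t * Real.exp (c * t) ≤ V 0 := by simpa [hg] using h1
    have h3 : Real.exp (c * t) * (Real.exp (c * t))⁻¹ = 1 :=
      mul_inv_cancel₀ (Real.exp_pos _).ne'
    rw [Real.exp_neg]
    nlinarith [inv_pos.mpr (Real.exp_pos (c * t)), hV0 t]
  have hVlim : Filter.Tendsto V Filter.atTop (nhds 0) := by
    have hB : Filter.Tendsto (fun t => V 0 * Real.exp (-(c * t))) Filter.atTop (nhds 0) := by
      have h1 : Filter.Tendsto (fun t : ℝ => -(c * t)) Filter.atTop Filter.atBot := by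
        exact Filter.tendsto_neg_atTop_atBot.comp
          (Filter.Tendsto.const_mul_atTop hc Filter.tendsto_id)
      have h2 := Real.tendsto_exp_atBot.comp h1
      have h3 := h2.const_mul (V 0)
      simpa using h3
    refine tendsto_of_tendsto_of_tendsto_of_le_of_le' tendsto_const_nhds hB
      (Filter.Eventually.of_forall hV0) ?_
    exact Filter.eventually_atTop.mpr ⟨0, fun t ht => hbound t ht⟩
  rw [tendsto_pi_nhds]
  intro i
  have hb : Filter.Tendsto (fun t => Real.sqrt (V t / d i)) Filter.atTop (nhds 0) := by
    have h1 := hVlim.div_const (d i)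
    have h2 := (Real.continuous_sqrt.tendsto _).comp h1
    simpa [Function.comp_def] using h2
  have hub : ∀ t, e t i ≤ Real.sqrt (V t / d i) := by
    intro t
    have h1 : (e t i) ^ 2 ≤ V t / d i := by
      rw [le_div_iff₀ (hd i)]
      calc (e t i) ^ 2 * d i = d i * (e t i) ^ 2 := by ring
        _ ≤ V t := Finset.single_le_sum (f := fun j => d j * (e t j) ^ 2)
            (fun j _ => mul_nonneg (hd j).le (sq_nonneg _)) (Finset.mem_univ i)
    calc e t i ≤ |e t i| := le_abs_self _
      _ = Real.sqrt ((e t i) ^ 2) := (Real.sqrt_sq_eq_abs _).symm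
      _ ≤ _ := Real.sqrt_le_sqrt h1
  have hlb : ∀ t, -Real.sqrt (V t / d i) ≤ e t i := by
    intro t
    rw [neg_le]
    have h1 : (e t i) ^ 2 ≤ V t / d i := by
      rw [le_div_iff₀ (hd i)]
      calc (e t i) ^ 2 * d i = d i * (e t i) ^ 2 := by ring
        _ ≤ V t := Finset.single_le_sum (f := fun j => d j * (e t j) ^ 2)
            (fun j _ => mul_nonneg (hd j).le (sq_nonneg _)) (Finset.mem_univ i)
    calc -(e t i) ≤ |e t i| := neg_le_abs _
      _ = Real.sqrt ((e t i) ^ 2) := (Real.sqrt_sq_eq_abs _).symm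
      _ ≤ _ := Real.sqrt_le_sqrt h1
  have hfin : Filter.Tendsto (fun t => e t i) Filter.atTop (nhds 0) :=
    tendsto_of_tendsto_of_tendsto_of_le_of_le (by simpa using hb.neg) hb hlb hub
  simpa using hfin
end

section
/- (Stability of the Foschini–Miljanic algorithm.) Let n ≥ 1, let g_{ji} > 0, ν_i > 0, γ_i > 0, define the n×n matrix C by C_{ii} = 0 and C_{ij} = γ_i g_{ji}/g_{ii} for i ≠ j, and the vector η by η_i = γ_i ν_i/g_{ii}. Assume the spectral radius of C is strictly less than 1, and let k_i > 0 be arbitrary proportionality constants with K = diag(k_i). Then every differentiable function p : ℝ → ℝⁿ satisfying the Foschini–Miljanic dynamics p_i'(t) = k_i ( −p_i(t) + γ_i ( ∑_{j≠i} (g_{ji}/g_{ii}) p_j(t) + ν_i/g_{ii} ) ) for all t ≥ 0, with any initial state p(0), converges as t → ∞ to the unique equilibrium p* = (I − C)^{-1} η. -/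
open Matrix Finset

section SpectralLemmas

attribute [local instance] Matrix.linftyOpNormedRing Matrix.linftyOpNormedAlgebra

private lemma fm_specRad_bound {n : ℕ} (C : Matrix (Fin n) (Fin n) ℝ) (z : ℂ)
    (hz : z ∈ spectrum ℂ (C.map (algebraMap ℝ ℂ))) : ‖z‖ ≤ specRad C := by
  apply le_csSup
  · exact ((spectrum.isCompact (C.map (algebraMap ℝ ℂ))).image continuous_norm).bddAbove
  · exact Set.mem_image_of_mem _ hz

private lemma fm_spectralRadius_le {n : ℕ} (C : Matrix (Fin n) (Fin n) ℝ) :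
    spectralRadius ℂ (C.map (algebraMap ℝ ℂ)) ≤ ENNReal.ofReal (specRad C) := by
  rw [spectralRadius]
  refine iSup₂_le fun z hz => ?_
  rw [show ((‖z‖₊ : ENNReal)) = ENNReal.ofReal ‖z‖ from (ENNReal.ofReal_eq_coe_nnreal (norm_nonneg z)).symm]
  exact ENNReal.ofReal_le_ofReal (fm_specRad_bound C z hz)

private lemma fm_map_pow_eq {n : ℕ} (C : Matrix (Fin n) (Fin n) ℝ) (m : ℕ) :
    (C.map (algebraMap ℝ ℂ)) ^ m = (C ^ m).map (algebraMap ℝ ℂ) := by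
  have h : ∀ (B : Matrix (Fin n) (Fin n) ℝ), B.map (algebraMap ℝ ℂ) =
      (algebraMap ℝ ℂ).mapMatrix B := fun B => rfl
  rw [h, h, ← map_pow]

private lemma fm_exists_small_pow {n : ℕ} (C : Matrix (Fin n) (Fin n) ℝ)
    (hρ : specRad C < 1) :
    ∃ m : ℕ, 1 ≤ m ∧ ‖(C.map (algebraMap ℝ ℂ)) ^ m‖ < 1 := by
  set M := C.map (algebraMap ℝ ℂ)
  have h1 : spectralRadius ℂ M < 1 :=
    lt_of_le_of_lt (fm_spectralRadius_le C) (by exact_mod_cast ENNReal.ofReal_lt_one.2 hρ)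
  have hG := spectrum.pow_nnnorm_pow_one_div_tendsto_nhds_spectralRadius M
  have hev : ∀ᶠ m : ℕ in Filter.atTop, (‖M ^ m‖₊ : ENNReal) ^ (1 / m : ℝ) < 1 :=
    hG.eventually_lt_const h1
  obtain ⟨m, hm, hm1⟩ := (hev.and (Filter.eventually_ge_atTop 1)).exists
  refine ⟨m, hm1, ?_⟩
  by_contra h
  push_neg at h
  have h' : (1 : ENNReal) ≤ (‖M ^ m‖₊ : ENNReal) := by
    rw [show ((1:ENNReal)) = ((1:NNReal):ENNReal) by simp]
    exact_mod_cast (by exact_mod_cast h : (1:NNReal) ≤ ‖M ^ m‖₊)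
  have : (1 : ENNReal) ≤ (‖M ^ m‖₊ : ENNReal) ^ (1 / m : ℝ) :=
    ENNReal.one_le_rpow h' (by positivity)
  exact absurd hm (not_lt.2 this)

private lemma fm_row_sum_le_norm {n : ℕ} (A : Matrix (Fin n) (Fin n) ℝ) (i : Fin n) :
    ∑ j, |A i j| ≤ ‖(A.map (algebraMap ℝ ℂ))‖ := by
  rw [Matrix.linfty_opNorm_def]
  have h1 : ∑ j, |A i j| = ((∑ j, ‖(A.map (algebraMap ℝ ℂ)) i j‖₊ : NNReal) : ℝ) := by
    push_cast
    refine Finset.sum_congr rfl fun j _ => ?_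
    simp [Matrix.map_apply, Complex.norm_real, Real.norm_eq_abs]
  rw [h1]
  have h2 := Finset.le_sup
    (f := fun i => ∑ j, ‖(A.map (algebraMap ℝ ℂ)) i j‖₊) (Finset.mem_univ i)
  exact_mod_cast h2

private lemma fm_isUnit_one_sub_det {n : ℕ} (C : Matrix (Fin n) (Fin n) ℝ)
    (hρ : specRad C < 1) : IsUnit (1 - C).det := by
  set M := C.map (algebraMap ℝ ℂ) with hM
  have h1 : (1 : ℂ) ∉ spectrum ℂ M := fun h =>
    absurd (lt_of_le_of_lt (fm_specRad_bound C 1 h) hρ) (by simp)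
  rw [spectrum.mem_iff, not_not] at h1
  have h2 : IsUnit ((1 : Matrix (Fin n) (Fin n) ℂ) - M) := by simpa using h1
  have h3 : ((1 : Matrix (Fin n) (Fin n) ℂ) - M) = ((1 - C).map (algebraMap ℝ ℂ)) := by
    ext i j
    simp only [hM, Matrix.sub_apply, Matrix.map_apply, Matrix.one_apply]
    split <;> simp
  rw [h3, Matrix.isUnit_iff_isUnit_det] at h2
  have h4 : ((1 - C).map (algebraMap ℝ ℂ)).det = algebraMap ℝ ℂ (1 - C).det :=
    ((algebraMap ℝ ℂ).map_det (1 - C)).symm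
  rw [h4, isUnit_iff_ne_zero] at h2
  rw [isUnit_iff_ne_zero]
  intro h
  exact h2 (by rw [h]; simp)

private lemma fm_pow_entry_nonneg {n : ℕ} (C : Matrix (Fin n) (Fin n) ℝ)
    (hC : ∀ i j, 0 ≤ C i j) : ∀ m i j, 0 ≤ (C ^ m) i j := by
  intro m
  induction m with
  | zero =>
    intro i j
    rw [pow_zero, Matrix.one_apply]
    split <;> norm_num
  | succ m ih =>
    intro i j
    rw [pow_succ, Matrix.mul_apply]
    exact Finset.sum_nonneg fun l _ => mul_nonneg (ih i l) (hC l j)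

/-- From `specRad C < 1` and entrywise nonnegativity, construct a vector `v ≥ 1`
(componentwise) and `β ∈ [0,1)` with `C *ᵥ v ≤ β • v` componentwise. -/
private lemma fm_exists_v {n : ℕ} (hn : 1 ≤ n) (C : Matrix (Fin n) (Fin n) ℝ)
    (hCn : ∀ i j, 0 ≤ C i j) (hρ : specRad C < 1) :
    ∃ (v : Fin n → ℝ) (β : ℝ), (∀ i, 1 ≤ v i) ∧ 0 ≤ β ∧ β < 1 ∧
      ∀ i, (C *ᵥ v) i ≤ β * v i := by
  haveI : NeZero n := ⟨by omega⟩
  have hne : (univ : Finset (Fin n)).Nonempty := univ_nonempty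
  obtain ⟨m, hm1, hθ⟩ := fm_exists_small_pow C hρ
  set θ : ℝ := ‖(C.map (algebraMap ℝ ℂ)) ^ m‖ with hθdef
  have hθ0 : 0 ≤ θ := norm_nonneg _
  have hrow : ∀ i, ∑ j, (C ^ m) i j ≤ θ := by
    intro i
    have h1 : ∑ j, (C ^ m) i j = ∑ j, |(C ^ m) i j| :=
      Finset.sum_congr rfl fun j _ => (abs_of_nonneg (fm_pow_entry_nonneg C hCn m i j)).symm
    rw [h1, hθdef, fm_map_pow_eq]
    exact fm_row_sum_le_norm (C ^ m) i
  set w : Fin n → ℝ := fun _ => 1 with hw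
  set v : Fin n → ℝ := fun i => ∑ j ∈ range m, ((C ^ j) *ᵥ w) i with hv
  have hterm : ∀ j i, 0 ≤ ((C ^ j) *ᵥ w) i := by
    intro j i
    rw [Matrix.mulVec, dotProduct]
    exact Finset.sum_nonneg fun l _ => by
      simpa [hw] using fm_pow_entry_nonneg C hCn j i l
  have hterm0 : ∀ i, ((C ^ 0) *ᵥ w) i = 1 := by
    intro i; rw [pow_zero, Matrix.one_mulVec]
  have hv1 : ∀ i, 1 ≤ v i := by
    intro i
    have h1 : ((C ^ 0) *ᵥ w) i ≤ v i :=
      Finset.single_le_sum (f := fun j => ((C ^ j) *ᵥ w) i)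
        (fun j _ => hterm j i) (mem_range.2 (by omega))
    rw [hterm0 i] at h1
    exact h1
  have hCv' : ∀ i, (C *ᵥ v) i = v i - 1 + ((C ^ m) *ᵥ w) i := by
    intro i
    have h1 : (C *ᵥ v) i = ∑ j ∈ range m, ((C ^ (j + 1)) *ᵥ w) i := by
      rw [Matrix.mulVec, dotProduct]
      have h2 : ∀ l, C i l * v l = ∑ j ∈ range m, C i l * ((C ^ j) *ᵥ w) l := by
        intro l; rw [hv]; rw [Finset.mul_sum]
      rw [Finset.sum_congr rfl fun l _ => h2 l, Finset.sum_comm]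
      refine Finset.sum_congr rfl fun j _ => ?_
      have h3 : ((C ^ (j + 1)) *ᵥ w) i = (C *ᵥ ((C ^ j) *ᵥ w)) i := by
        rw [Matrix.mulVec_mulVec, ← pow_succ']
      rw [h3, Matrix.mulVec, dotProduct]
    have h4 : ∑ j ∈ range (m + 1), ((C ^ j) *ᵥ w) i
        = (∑ j ∈ range m, ((C ^ (j + 1)) *ᵥ w) i) + ((C ^ 0) *ᵥ w) i :=
      Finset.sum_range_succ' (fun j => ((C ^ j) *ᵥ w) i) m
    have h5 : ∑ j ∈ range (m + 1), ((C ^ j) *ᵥ w) i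
        = (∑ j ∈ range m, ((C ^ j) *ᵥ w) i) + ((C ^ m) *ᵥ w) i :=
      Finset.sum_range_succ (fun j => ((C ^ j) *ᵥ w) i) m
    rw [h1]
    rw [hterm0 i] at h4
    have h6 : v i = ∑ j ∈ range m, ((C ^ j) *ᵥ w) i := rfl
    linarith [h4, h5]
  set Vmax := univ.sup' hne v with hVmax
  have hle_Vmax : ∀ i, v i ≤ Vmax := fun i => Finset.le_sup' v (mem_univ i)
  have hVmax1 : 1 ≤ Vmax := le_trans (hv1 ⟨0, by omega⟩) (hle_Vmax ⟨0, by omega⟩)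
  have hVmax_pos : 0 < Vmax := by linarith
  refine ⟨v, 1 - (1 - θ) / Vmax, hv1, ?_, ?_, ?_⟩
  · have h7 : (1 - θ) / Vmax ≤ 1 := by
      rw [div_le_one hVmax_pos]; linarith
    linarith
  · have h8 : 0 < (1 - θ) / Vmax := div_pos (by linarith) hVmax_pos
    linarith
  · intro i
    have h9 : ((C ^ m) *ᵥ w) i ≤ θ := by
      have : ((C ^ m) *ᵥ w) i = ∑ j, (C ^ m) i j := by
        rw [Matrix.mulVec, dotProduct]
        exact Finset.sum_congr rfl fun j _ => by simp [hw]
      rw [this]; exact hrow i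
    have h10 : (C *ᵥ v) i ≤ v i - (1 - θ) := by
      rw [hCv' i]; linarith
    have h11 : (1 - θ) / Vmax * v i ≤ 1 - θ := by
      rw [div_mul_eq_mul_div, div_le_iff₀ hVmax_pos]
      exact mul_le_mul_of_nonneg_left (hle_Vmax i) (by linarith)
    have h12 : (1 - (1 - θ) / Vmax) * v i = v i - (1 - θ) / Vmax * v i := by ring
    rw [h12]
    linarith

end SpectralLemmas

private lemma fm_lyapunov_decay {n : ℕ} (hn : 1 ≤ n) (C : Matrix (Fin n) (Fin n) ℝ)
    (hCn : ∀ i j, 0 ≤ C i j) (v : Fin n → ℝ) (hv1 : ∀ i, 1 ≤ v i)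
    (β : ℝ) (hβ0 : 0 ≤ β) (hβ1 : β < 1) (hCv : ∀ i, (C *ᵥ v) i ≤ β * v i)
    (k : Fin n → ℝ) (hk : ∀ i, 0 < k i)
    (e : ℝ → Fin n → ℝ)
    (he : ∀ t : ℝ, 0 ≤ t → HasDerivAt e (fun i => k i * (-(e t i) + (C *ᵥ e t) i)) t) :
    Filter.Tendsto e Filter.atTop (nhds 0) := by
  haveI : NeZero n := ⟨by omega⟩
  have hne : (univ : Finset (Fin n)).Nonempty := univ_nonempty
  set kmin := univ.inf' hne k with hkmin
  set kmax := univ.sup' hne k with hkmax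
  have hkmin_le : ∀ i, kmin ≤ k i := fun i => Finset.inf'_le k (mem_univ i)
  have hle_kmax : ∀ i, k i ≤ kmax := fun i => Finset.le_sup' k (mem_univ i)
  have hkmin_pos : 0 < kmin := by
    obtain ⟨i, _, hi⟩ := Finset.exists_mem_eq_inf' hne k
    rw [hkmin, hi]; exact hk i
  have hkmax_pos : 0 < kmax :=
    lt_of_lt_of_le hkmin_pos ((hkmin_le ⟨0, by omega⟩).trans (hle_kmax ⟨0, by omega⟩))
  set c := kmin * (1 - β) with hc
  have hc_pos : 0 < c := mul_pos hkmin_pos (by linarith)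
  have hc_le : ∀ i, c ≤ k i * (1 - β) := fun i =>
    mul_le_mul_of_nonneg_right (hkmin_le i) (by linarith)
  have hc_le_kmax : c ≤ kmax := by
    calc c ≤ k ⟨0, by omega⟩ * (1 - β) := hc_le _
    _ ≤ k ⟨0, by omega⟩ * 1 := mul_le_mul_of_nonneg_left (by linarith) (hk _).le
    _ ≤ kmax := by rw [mul_one]; exact hle_kmax _
  set q : ℝ → Fin n → ℝ := fun t i => e t i / v i with hq
  set f : ℝ → ℝ := fun t => ‖q t‖ with hf
  have hv_pos : ∀ i, 0 < v i := fun i => lt_of_lt_of_le one_pos (hv1 i)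
  have hf_nonneg : ∀ t, 0 ≤ f t := fun t => norm_nonneg _
  have h_ei_le : ∀ t i, |e t i| ≤ v i * f t := by
    intro t i
    have h1 : |e t i / v i| ≤ f t := norm_le_pi_norm (q t) i
    rw [abs_div, abs_of_pos (hv_pos i), div_le_iff₀ (hv_pos i)] at h1
    linarith [h1]
  have hCe : ∀ t i, |(C *ᵥ e t) i| ≤ β * (v i * f t) := by
    intro t i
    have h1 : |(C *ᵥ e t) i| ≤ ∑ j, C i j * (v j * f t) := by
      rw [Matrix.mulVec, dotProduct]
      refine le_trans (Finset.abs_sum_le_sum_abs _ _) (Finset.sum_le_sum fun j _ => ?_)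
      rw [abs_mul, abs_of_nonneg (hCn i j)]
      exact mul_le_mul_of_nonneg_left (h_ei_le t j) (hCn i j)
    have h2 : ∑ j, C i j * (v j * f t) = (C *ᵥ v) i * f t := by
      rw [Matrix.mulVec, dotProduct, Finset.sum_mul]
      exact Finset.sum_congr rfl fun j _ => by ring
    calc |(C *ᵥ e t) i| ≤ (C *ᵥ v) i * f t := by rw [← h2]; exact h1
    _ ≤ β * v i * f t := mul_le_mul_of_nonneg_right (hCv i) (hf_nonneg t)
    _ = β * (v i * f t) := by ring
  -- continuity
  have hf_contAt : ∀ t : ℝ, 0 ≤ t → ContinuousAt f t := by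
    intro t ht
    have h1 : ContinuousAt q t := by
      apply continuousAt_pi.2
      intro i
      exact (((continuous_apply i).continuousAt).comp (he t ht).continuousAt).div_const _
    exact h1.norm
  -- main decay bound
  have key : ∀ b : ℝ, 0 ≤ b → f b ≤ (f 0 + 1) * Real.exp (-(c / 2) * b) := by
    intro b hb
    set B : ℝ → ℝ := fun t => (f 0 + 1) * Real.exp (-(c / 2) * t) with hB
    set B' : ℝ → ℝ := fun t => -(c / 2) * B t with hB'
    have hBpos : ∀ t, 0 < B t :=
      fun t => mul_pos (by linarith [hf_nonneg 0]) (Real.exp_pos _)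
    have hBderiv : ∀ t, HasDerivAt B (B' t) t := by
      intro t
      have h1 : HasDerivAt (fun s : ℝ => -(c / 2) * s) (-(c / 2)) t := by
        simpa using (hasDerivAt_id t).const_mul (-(c / 2))
      have h2 := (h1.exp).const_mul (f 0 + 1)
      have h3 : (f 0 + 1) * (Real.exp (-(c / 2) * t) * -(c / 2))
          = -(c / 2) * ((f 0 + 1) * Real.exp (-(c / 2) * t)) := by ring
      rw [h3] at h2
      exact h2
    have hfcont : ContinuousOn f (Set.Icc 0 b) := fun t ht =>
      (hf_contAt t ht.1).continuousWithinAt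
    have ha : f 0 ≤ B 0 := by
      simp only [hB, mul_zero, neg_zero, Real.exp_zero, mul_one]
      linarith [hf_nonneg 0]
    have hbound : ∀ x ∈ Set.Ico 0 b, f x = B x → -c * f x < B' x := by
      rintro x ⟨hx0, hxb⟩ hfB
      rw [hfB]
      show -c * B x < -(c / 2) * B x
      nlinarith [hBpos x]
    have hslopeAll : ∀ x ∈ Set.Ico 0 b, ∀ r, -c * f x < r →
        ∃ᶠ z in nhdsWithin x (Set.Ioi x), slope f x z < r := by
      rintro x ⟨hx0, hxb⟩ r hr
      have hr' : -(c * f x) < r := by simpa using hr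
      have hε : 0 < (r + c * f x) / 2 := by linarith
      set ε := (r + c * f x) / 2 with hεdef
      set d : Fin n → ℝ := fun i => k i * (-(e x i) + (C *ᵥ e x) i) with hddef
      have hdi : ∀ i, HasDerivAt (fun t => e t i) (d i) x :=
        fun i => hasDerivAt_pi.1 (he x hx0) i
      have hslope : ∀ i, ∀ᶠ z in nhdsWithin x (Set.Ioi x),
          |slope (fun t => e t i) x z - d i| < ε := by
        intro i
        have h1 : Filter.Tendsto (slope (fun t => e t i) x) (nhdsWithin x {x}ᶜ)
            (nhds (d i)) := hasDerivAt_iff_tendsto_slope.1 (hdi i)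
        have h2 : nhdsWithin x (Set.Ioi x) ≤ nhdsWithin x {x}ᶜ :=
          nhdsWithin_mono x (fun z hz => ne_of_gt hz)
        have h3 := Metric.tendsto_nhds.1 (h1.mono_left h2) ε hε
        exact h3.mono fun z hz => by rw [Real.dist_eq] at hz; exact hz
      have hnear : ∀ᶠ z in nhdsWithin x (Set.Ioi x), z ∈ Set.Ioo x (x + 1 / kmax) :=
        Ioo_mem_nhdsGT_of_mem ⟨le_refl x, lt_add_of_pos_right x (by positivity)⟩
      have hall : ∀ᶠ z in nhdsWithin x (Set.Ioi x),
          (∀ i, |slope (fun t => e t i) x z - d i| < ε) ∧ z ∈ Set.Ioo x (x + 1 / kmax) :=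
        (Filter.eventually_all.2 hslope).and hnear
      refine (hall.mono ?_).frequently
      rintro z ⟨hsl, hz1, hz2⟩
      set δ := z - x with hδdef
      have hδpos : 0 < δ := by simp only [hδdef, sub_pos]; exact hz1
      have hδkmax : δ * kmax < 1 := by
        rw [← lt_div_iff₀ hkmax_pos]
        simp only [hδdef]
        linarith [hz2]
      have hcomp : ∀ i, |e z i| ≤ v i * (f x * (1 - δ * c)) + δ * ε := by
        intro i
        have hs := hsl i
        have hez : e z i = e x i + δ * slope (fun t => e t i) x z := by
          rw [slope_def_field]
          field_simp
          rw [hδdef]; ring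
        have h4 : |e z i| ≤ |e x i + δ * d i| + δ * ε := by
          rw [hez]
          have hrw2 : e x i + δ * slope (fun t => e t i) x z
              = (e x i + δ * d i) + δ * (slope (fun t => e t i) x z - d i) := by ring
          rw [hrw2]
          refine le_trans (abs_add_le _ _) ?_
          have h5 : |δ * (slope (fun t => e t i) x z - d i)| ≤ δ * ε := by
            rw [abs_mul, abs_of_pos hδpos]
            exact mul_le_mul_of_nonneg_left hs.le hδpos.le
          linarith
        have hki : δ * k i ≤ 1 := le_trans
          (mul_le_mul_of_nonneg_left (hle_kmax i) hδpos.le) hδkmax.le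
        have h5 : |e x i + δ * d i| ≤ v i * f x * (1 - δ * c) := by
          have hrw : e x i + δ * d i
              = (1 - δ * k i) * e x i + (δ * k i) * (C *ᵥ e x) i := by
            simp only [hddef]; ring
          rw [hrw]
          have hδk_nonneg : (0:ℝ) ≤ δ * k i := mul_nonneg hδpos.le (hk i).le
          have h6 : |(1 - δ * k i) * e x i + (δ * k i) * (C *ᵥ e x) i|
              ≤ (1 - δ * k i) * |e x i| + (δ * k i) * |(C *ᵥ e x) i| := by
            refine le_trans (abs_add_le _ _) ?_
            rw [abs_mul, abs_mul, abs_of_nonneg (by linarith : (0:ℝ) ≤ 1 - δ * k i),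
              abs_of_nonneg hδk_nonneg]
          have h7 : (1 - δ * k i) * |e x i| ≤ (1 - δ * k i) * (v i * f x) :=
            mul_le_mul_of_nonneg_left (h_ei_le x i) (by linarith)
          have h8 : (δ * k i) * |(C *ᵥ e x) i| ≤ (δ * k i) * (β * (v i * f x)) :=
            mul_le_mul_of_nonneg_left (hCe x i) hδk_nonneg
          have h9 : (1 - δ * k i) * (v i * f x) + (δ * k i) * (β * (v i * f x))
              = (v i * f x) * (1 - δ * (k i * (1 - β))) := by ring
          have h10 : (v i * f x) * (1 - δ * (k i * (1 - β)))
              ≤ (v i * f x) * (1 - δ * c) := by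
            refine mul_le_mul_of_nonneg_left ?_
              (mul_nonneg (hv_pos i).le (hf_nonneg x))
            have h11 := hc_le i
            nlinarith
          calc |(1 - δ * k i) * e x i + (δ * k i) * (C *ᵥ e x) i|
              ≤ (1 - δ * k i) * |e x i| + (δ * k i) * |(C *ᵥ e x) i| := h6
            _ ≤ (1 - δ * k i) * (v i * f x) + (δ * k i) * (β * (v i * f x)) := by linarith
            _ = (v i * f x) * (1 - δ * (k i * (1 - β))) := h9
            _ ≤ (v i * f x) * (1 - δ * c) := h10
            _ = v i * f x * (1 - δ * c) := by ring
        calc |e z i| ≤ |e x i + δ * d i| + δ * ε := h4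
          _ ≤ v i * f x * (1 - δ * c) + δ * ε := by linarith
          _ = v i * (f x * (1 - δ * c)) + δ * ε := by ring
      have hδc : δ * c ≤ 1 := le_trans
        (mul_le_mul_of_nonneg_left hc_le_kmax hδpos.le) hδkmax.le
      have hfz : f z ≤ f x * (1 - δ * c) + δ * ε := by
        have hfx1 : 0 ≤ f x * (1 - δ * c) := mul_nonneg (hf_nonneg x) (by linarith)
        have hδε : 0 ≤ δ * ε := mul_nonneg hδpos.le hε.le
        have hRHS : 0 ≤ f x * (1 - δ * c) + δ * ε := by linarith
        rw [hf, pi_norm_le_iff_of_nonneg hRHS]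
        intro i
        rw [Real.norm_eq_abs]
        show |e z i / v i| ≤ _
        rw [abs_div, abs_of_pos (hv_pos i), div_le_iff₀ (hv_pos i)]
        have h12 : δ * ε ≤ v i * (δ * ε) := by
          have := mul_le_mul_of_nonneg_right (hv1 i) hδε
          linarith
        calc |e z i| ≤ v i * (f x * (1 - δ * c)) + δ * ε := hcomp i
          _ ≤ v i * (f x * (1 - δ * c)) + v i * (δ * ε) := by linarith
          _ = (f x * (1 - δ * c) + δ * ε) * v i := by ring
      show slope f x z < r
      rw [slope_def_field, div_lt_iff₀ (by linarith : (0:ℝ) < z - x)]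
      have hexpand : f x * (1 - δ * c) = f x - c * f x * δ := by ring
      have h13 : f z - f x ≤ -(c * f x) * δ + δ * ε := by
        rw [hexpand] at hfz; linarith
      have h14 : -(c * f x) + ε < r := by
        rw [hεdef]; linarith
      have h15 : (-(c * f x) + ε) * δ < r * δ := mul_lt_mul_of_pos_right h14 hδpos
      calc f z - f x ≤ -(c * f x) * δ + δ * ε := h13
        _ = (-(c * f x) + ε) * δ := by ring
        _ < r * δ := h15
        _ = r * (z - x) := by rw [hδdef]
    have main := image_le_of_liminf_slope_right_lt_deriv_boundary
      hfcont hslopeAll ha hBderiv hbound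
    exact main (Set.mem_Icc.2 ⟨hb, le_refl b⟩)
  -- conclude convergence
  have hexp0 : Filter.Tendsto (fun t : ℝ => Real.exp (-(c / 2) * t))
      Filter.atTop (nhds 0) := by
    apply Real.tendsto_exp_comp_nhds_zero.2
    exact Filter.Tendsto.const_mul_atTop_of_neg (by linarith : -(c/2) < 0) Filter.tendsto_id
  have hB0 : Filter.Tendsto (fun t : ℝ => (f 0 + 1) * Real.exp (-(c / 2) * t))
      Filter.atTop (nhds 0) := by
    simpa using hexp0.const_mul (f 0 + 1)
  rw [tendsto_pi_nhds]
  intro i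
  have hub : ∀ᶠ t in Filter.atTop,
      |e t i| ≤ v i * ((f 0 + 1) * Real.exp (-(c / 2) * t)) := by
    filter_upwards [Filter.eventually_ge_atTop 0] with t ht
    calc |e t i| ≤ v i * f t := h_ei_le t i
      _ ≤ v i * ((f 0 + 1) * Real.exp (-(c / 2) * t)) :=
        mul_le_mul_of_nonneg_left (key t ht) (hv_pos i).le
  have hvB : Filter.Tendsto (fun t : ℝ => v i * ((f 0 + 1) * Real.exp (-(c / 2) * t)))
      Filter.atTop (nhds 0) := by
    simpa using hB0.const_mul (v i)
  have hvBneg : Filter.Tendsto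
      (fun t : ℝ => -(v i * ((f 0 + 1) * Real.exp (-(c / 2) * t))))
      Filter.atTop (nhds 0) := by
    simpa using hvB.neg
  simp only [Pi.zero_apply]
  refine tendsto_of_tendsto_of_tendsto_of_le_of_le' hvBneg hvB ?_ ?_
  · filter_upwards [hub] with t ht
    have := abs_le.1 ht
    linarith [this.1]
  · filter_upwards [hub] with t ht
    have := abs_le.1 ht
    linarith [this.2]

/-- Stability of the Foschini–Miljanic algorithm: with positive gains
`g j i`, noises `ν i`, SINR targets `γ i`, `C i j = γ i * g j i / g i i` off the
diagonal, `η i = γ i * ν i / g i i`, spectral radius of `C` less than `1`, and arbitrary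
positive proportionality constants `k i`, every differentiable trajectory `p : ℝ → ℝⁿ`
of the Foschini–Miljanic dynamics
`pᵢ'(t) = kᵢ (-pᵢ(t) + γᵢ (∑_{j ≠ i} (g j i / g i i) pⱼ(t) + νᵢ / g i i))` for `t ≥ 0`,
with any initial state `p 0`, converges as `t → ∞` to the unique equilibrium
`p* = (I - C)⁻¹ η`. -/
theorem foschini_miljanic_stability
    (n : ℕ) (hn : 1 ≤ n)
    (g : Fin n → Fin n → ℝ) (ν γ : Fin n → ℝ)
    (hg : ∀ j i, 0 < g j i) (hν : ∀ i, 0 < ν i) (hγ : ∀ i, 0 < γ i)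
    (C : Matrix (Fin n) (Fin n) ℝ)
    (hC : ∀ i j, C i j = if i = j then 0 else γ i * g j i / g i i)
    (η : Fin n → ℝ) (hη : ∀ i, η i = γ i * ν i / g i i)
    (hρ : specRad C < 1)
    (k : Fin n → ℝ) (hk : ∀ i, 0 < k i)
    (p : ℝ → Fin n → ℝ)
    (hp : ∀ t : ℝ, 0 ≤ t → HasDerivAt p
      (fun i => k i * (-(p t i) +
        γ i * ((∑ j ∈ univ.erase i, g j i / g i i * p t j) + ν i / g i i))) t) :
    Filter.Tendsto p Filter.atTop (nhds ((1 - C)⁻¹ *ᵥ η)) := by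
  have hCn : ∀ i j, 0 ≤ C i j := by
    intro i j
    rw [hC]
    split
    · exact le_refl 0
    · exact le_of_lt (div_pos (mul_pos (hγ i) (hg j i)) (hg i i))
  -- the equilibrium
  set pstar : Fin n → ℝ := (1 - C)⁻¹ *ᵥ η with hpstar
  have hdet : IsUnit (1 - C).det := fm_isUnit_one_sub_det C hρ
  have heq : (1 - C) *ᵥ pstar = η := by
    rw [hpstar, Matrix.mulVec_mulVec, Matrix.mul_nonsing_inv _ hdet, Matrix.one_mulVec]
  have heq' : ∀ i, η i = pstar i - (C *ᵥ pstar) i := by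
    intro i
    have h1 := congrFun heq i
    rw [Matrix.sub_mulVec, Matrix.one_mulVec] at h1
    rw [← h1]
    rfl
  -- rewriting the right-hand side of the ODE
  have hrhs : ∀ (x : Fin n → ℝ) (i : Fin n),
      γ i * ((∑ j ∈ univ.erase i, g j i / g i i * x j) + ν i / g i i)
        = (C *ᵥ x) i + η i := by
    intro x i
    have h1 : (C *ᵥ x) i = ∑ j ∈ univ.erase i, C i j * x j := by
      rw [Matrix.mulVec, dotProduct]
      rw [← Finset.sum_erase_add _ _ (mem_univ i)]
      rw [hC i i, if_pos rfl]
      simp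
    have h2 : ∑ j ∈ univ.erase i, C i j * x j
        = γ i * ∑ j ∈ univ.erase i, g j i / g i i * x j := by
      rw [Finset.mul_sum]
      refine Finset.sum_congr rfl fun j hj => ?_
      have hij : i ≠ j := fun h => (Finset.mem_erase.1 hj).1 h.symm
      rw [hC i j, if_neg hij]
      ring
    rw [h1, h2, hη]
    ring
  -- the error trajectory
  set e : ℝ → Fin n → ℝ := fun t => p t - pstar with he_def
  have he : ∀ t : ℝ, 0 ≤ t →
      HasDerivAt e (fun i => k i * (-(e t i) + (C *ᵥ e t) i)) t := by
    intro t ht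
    have h1 := (hp t ht).sub_const pstar
    have h2 : (fun i => k i * (-(p t i) +
        γ i * ((∑ j ∈ univ.erase i, g j i / g i i * p t j) + ν i / g i i)))
        = fun i => k i * (-(e t i) + (C *ᵥ e t) i) := by
      funext i
      rw [hrhs (p t) i]
      have h3 : (C *ᵥ e t) i = (C *ᵥ p t) i - (C *ᵥ pstar) i := by
        rw [he_def]
        show (C *ᵥ (p t - pstar)) i = _
        rw [Matrix.mulVec_sub]
        rfl
      have h4 : e t i = p t i - pstar i := rfl
      rw [h3, h4, heq' i]
      ring
    rw [h2] at h1
    exact h1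
  -- apply the Lyapunov argument
  obtain ⟨v, β, hv1, hβ0, hβ1, hCv⟩ := fm_exists_v hn C hCn hρ
  have htend := fm_lyapunov_decay hn C hCn v hv1 β hβ0 hβ1 hCv k hk e he
  have hfinal := htend.add_const pstar
  rw [zero_add] at hfinal
  have hpe : (fun t => e t + pstar) = p := by
    funext t
    rw [he_def]
    simp
  rw [hpe] at hfinal
  exact hfinal
end
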